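/- arXiv:1309.1766 — 5 statements merged into one kernel-verified Lean document; each statement's English description precedes it below -/
import Mathlib

section
/- For every even characteristic 𝔪 = (𝔪¹,𝔪²) ∈ {0,1}^{2n} and every Z in the Siegel upper half-space H_n, the square of the theta constant of the first kind satisfies θ[𝔪](Z)² = Σ_{a ∈ 𝔽₂ⁿ} (−1)^{⟨a,𝔪²⟩} f_{a+𝔪¹}(Z) · f_a(Z), where f_a(Z) = θ[a,0](2Z) are the theta constants of the second kind. -/
open Complex Matrix

noncomputable section

attribute [local instance] Matrix.normedAddCommGroup Matrix.normedSpace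

/-- The Siegel upper half-space of degree `n`: symmetric complex matrices with
positive definite imaginary part. -/
def Siegel (n : ℕ) : Set (Matrix (Fin n) (Fin n) ℂ) :=
  {Z | Z.IsSymm ∧ (Matrix.of fun i j => (Z i j).im).PosDef}
/-- The shifted lattice vector `g + a/2`. -/
def thetaVec (n : ℕ) (a : Fin n → ZMod 2) (g : Fin n → ℤ) : Fin n → ℂ :=
  fun i => (g i : ℂ) + ((a i).val : ℂ) / 2

/-- A single term `exp(2πi Z[g+a/2])` of the theta series of the second kind. -/
def thetaTerm (n : ℕ) (a : Fin n → ZMod 2) (Z : Matrix (Fin n) (Fin n) ℂ)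
    (g : Fin n → ℤ) : ℂ :=
  Complex.exp (2 * (Real.pi : ℂ) * Complex.I *
    (thetaVec n a g ⬝ᵥ Z.mulVec (thetaVec n a g)))

/-- The theta constant of the second kind `f_a(Z) = Σ_g exp(2πi Z[g+a/2])`. -/
def thetaSecond (n : ℕ) (a : Fin n → ZMod 2) (Z : Matrix (Fin n) (Fin n) ℂ) : ℂ :=
  ∑' g : Fin n → ℤ, thetaTerm n a Z g

/-- A single term of the theta series of the first kind with characteristic `m`. -/
def thetaFirstTerm (n : ℕ) (m : (Fin n → ZMod 2) × (Fin n → ZMod 2))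
    (Z : Matrix (Fin n) (Fin n) ℂ) (g : Fin n → ℤ) : ℂ :=
  Complex.exp ((Real.pi : ℂ) * Complex.I *
    ((thetaVec n m.1 g ⬝ᵥ Z.mulVec (thetaVec n m.1 g)) +
      ∑ i, thetaVec n m.1 g i * ((m.2 i).val : ℂ)))

/-- The theta constant of the first kind `θ[m](Z)`. -/
def thetaFirst (n : ℕ) (m : (Fin n → ZMod 2) × (Fin n → ZMod 2))
    (Z : Matrix (Fin n) (Fin n) ℂ) : ℂ :=
  ∑' g : Fin n → ℤ, thetaFirstTerm n m Z g

/-! ### Auxiliary lemmas -/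

section Aux

lemma aux_sumZ (c : ℝ) (hc : 0 < c) : Summable (fun k : ℤ => Real.exp (-c * (k:ℝ)^2)) := by
  have key : Summable (fun n : ℕ => Real.exp (-c * (n:ℝ)^2)) := by
    have hgeo : Summable (fun n : ℕ => Real.exp (-c) ^ n) :=
      summable_geometric_of_lt_one (Real.exp_nonneg _) (Real.exp_lt_one_iff.2 (by linarith))
    refine Summable.of_nonneg_of_le (fun n => (Real.exp_pos _).le) (fun n => ?_) hgeo
    rw [← Real.exp_nat_mul]
    apply Real.exp_le_exp.2
    have h1 : (n:ℝ) ≤ (n:ℝ)^2 := by exact_mod_cast Nat.le_self_pow two_ne_zero n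
    nlinarith [mul_le_mul_of_nonneg_left h1 hc.le]
  refine Summable.of_nat_of_neg key ?_
  simpa using key

lemma aux_sumPi (n : ℕ) (c : ℝ) (hc : 0 < c) :
    Summable (fun g : Fin n → ℤ => Real.exp (-c * ∑ i, ((g i : ℝ))^2)) := by
  induction n with
  | zero => exact Summable.of_finite
  | succ n ih =>
    rw [← (Fin.consEquiv (fun _ : Fin (n+1) => ℤ)).summable_iff]
    have : Summable (fun p : ℤ × (Fin n → ℤ) =>
        Real.exp (-c * (p.1:ℝ)^2) * Real.exp (-c * ∑ i, ((p.2 i : ℝ))^2)) :=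
      (aux_sumZ c hc).mul_of_nonneg ih (fun _ => (Real.exp_pos _).le) (fun _ => (Real.exp_pos _).le)
    refine this.congr fun p => ?_
    rw [← Real.exp_add]
    congr 1
    simp [Fin.consEquiv, Fin.sum_univ_succ]
    ring

lemma aux_posdef_bound (n : ℕ) (Y : Matrix (Fin n) (Fin n) ℝ) (hY : Y.PosDef) :
    ∃ c > 0, ∀ x : Fin n → ℝ, c * ∑ i, (x i)^2 ≤ x ⬝ᵥ Y.mulVec x := by
  have hpos : ∀ x : Fin n → ℝ, x ≠ 0 → 0 < x ⬝ᵥ Y.mulVec x := by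
    intro x hx
    simpa using hY.dotProduct_mulVec_pos hx
  set Q : (Fin n → ℝ) → ℝ := fun x => x ⬝ᵥ Y.mulVec x with hQdef
  have hQc : Continuous Q := by
    simp only [hQdef, dotProduct, mulVec]
    fun_prop
  have hhom : ∀ (s : ℝ) (x : Fin n → ℝ), Q (s • x) = s^2 * Q x := by
    intro s x
    simp only [hQdef, Matrix.mulVec_smul, smul_dotProduct, dotProduct_smul, smul_eq_mul]
    ring
  rcases Nat.eq_zero_or_pos n with hn | hn
  · refine ⟨1, one_pos, fun x => ?_⟩
    subst hn
    simp [hQdef, dotProduct]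
  · set S : Set (Fin n → ℝ) := {x | ∑ i, (x i)^2 = 1} with hSdef
    have hScl : IsClosed S := isClosed_eq (by fun_prop) continuous_const
    have hSbd : Bornology.IsBounded S := by
      have : S ⊆ Metric.closedBall 0 1 := by
        intro x hx
        simp only [Metric.mem_closedBall, dist_zero_right]
        rw [pi_norm_le_iff_of_nonneg zero_le_one]
        intro i
        rw [Real.norm_eq_abs, abs_le]
        have h1 : (x i)^2 ≤ 1 := by
          rw [← hx]
          exact Finset.single_le_sum (fun j _ => sq_nonneg (x j)) (Finset.mem_univ i)
        constructor <;> nlinarith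
      exact (Metric.isBounded_closedBall).subset this
    have hScomp : IsCompact S := Metric.isCompact_of_isClosed_isBounded hScl hSbd
    have hSne : S.Nonempty := by
      refine ⟨Pi.single ⟨0, hn⟩ 1, ?_⟩
      simp [hSdef, Pi.single_apply]
    obtain ⟨x₀, hx₀S, hx₀min⟩ := hScomp.exists_isMinOn hSne hQc.continuousOn
    have hx₀ne : x₀ ≠ 0 := by
      intro h
      rw [h] at hx₀S
      simp [hSdef] at hx₀S
    refine ⟨Q x₀, hpos x₀ hx₀ne, fun x => ?_⟩
    by_cases hx : x = 0
    · simp [hx, hQdef]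
    · set t : ℝ := Real.sqrt (∑ i, (x i)^2) with htdef
      have hsum : 0 < ∑ i, (x i)^2 := by
        have : ∃ i, x i ≠ 0 := by
          by_contra h
          push_neg at h
          exact hx (funext h)
        obtain ⟨i, hi⟩ := this
        exact Finset.sum_pos' (fun j _ => sq_nonneg _)
          ⟨i, Finset.mem_univ i, pow_pos (abs_pos.2 hi) 2 |>.trans_eq (sq_abs _)⟩
      have ht : 0 < t := Real.sqrt_pos.2 hsum
      have hmem : t⁻¹ • x ∈ S := by
        simp only [hSdef, Set.mem_setOf_eq, Pi.smul_apply, smul_eq_mul, mul_pow]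
        rw [← Finset.mul_sum]
        rw [inv_pow, htdef, Real.sq_sqrt hsum.le]
        exact inv_mul_cancel₀ hsum.ne'
      have hle : Q x₀ ≤ Q (t⁻¹ • x) := hx₀min hmem
      rw [hhom] at hle
      have h2 : Q x₀ * t^2 ≤ Q x := by
        have ht2 : (0:ℝ) < t^2 := by positivity
        calc Q x₀ * t^2 ≤ (t⁻¹^2 * Q x) * t^2 := by nlinarith [hle, sq_nonneg t]
        _ = Q x := by field_simp
      show Q x₀ * ∑ i, (x i)^2 ≤ Q x
      calc Q x₀ * ∑ i, (x i)^2 = Q x₀ * t^2 := by rw [htdef, Real.sq_sqrt hsum.le]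
      _ ≤ Q x := h2

/-- The real version of `thetaVec`. -/
def rVec (n : ℕ) (a : Fin n → ZMod 2) (g : Fin n → ℤ) : Fin n → ℝ :=
  fun i => (g i : ℝ) + ((a i).val : ℝ) / 2

lemma aux_thetaVec_eq (n : ℕ) (a : Fin n → ZMod 2) (g : Fin n → ℤ) (i : Fin n) :
    thetaVec n a g i = ((rVec n a g i : ℝ) : ℂ) := by
  simp only [thetaVec, rVec]
  push_cast
  ring

lemma aux_im_quad (n : ℕ) (Z : Matrix (Fin n) (Fin n) ℂ) (r : Fin n → ℝ) :
    ((fun i => ((r i : ℝ) : ℂ)) ⬝ᵥ Z.mulVec (fun i => ((r i : ℝ) : ℂ))).im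
      = r ⬝ᵥ (Matrix.of fun i j => (Z i j).im).mulVec r := by
  simp only [dotProduct, Matrix.mulVec, Matrix.of_apply, Complex.im_sum, Complex.mul_im,
    Complex.ofReal_re, Complex.ofReal_im, Complex.re_sum, zero_mul, add_zero, mul_zero, zero_add]

lemma aux_im_lin (n : ℕ) (r : Fin n → ℝ) (m2 : Fin n → ZMod 2) :
    (∑ i, ((r i : ℝ) : ℂ) * ((m2 i).val : ℂ)).im = 0 := by
  simp only [Complex.im_sum]
  refine Finset.sum_eq_zero fun i _ => ?_
  simp only [Complex.mul_im, Complex.ofReal_im, Complex.ofReal_re, Complex.natCast_im,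
    Complex.natCast_re, mul_zero, zero_mul, add_zero]

lemma aux_re_two_pi_I (q : ℂ) : (2 * (Real.pi:ℂ) * I * q).re = -(2*Real.pi) * q.im := by
  simp [Complex.mul_re, Complex.mul_im] <;> ring

lemma aux_re_pi_I (q : ℂ) : ((Real.pi:ℂ) * I * q).re = -Real.pi * q.im := by
  simp [Complex.mul_re, Complex.mul_im] <;> ring

lemma aux_summable_shift (n : ℕ) (c : ℝ) (hc : 0 < c) (d : Fin n → ℝ) :
    Summable (fun g : Fin n → ℤ => Real.exp (-c * ∑ i, ((g i : ℝ) + d i)^2)) := by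
  refine Summable.of_nonneg_of_le (fun _ => (Real.exp_pos _).le) (fun g => ?_)
    ((aux_sumPi n (c/2) (by linarith)).mul_left (Real.exp (c * ∑ i, (d i)^2)))
  rw [← Real.exp_add]
  apply Real.exp_le_exp.2
  have key : ∀ i : Fin n, c/2 * ((g i:ℝ))^2 ≤ c * ((g i:ℝ) + d i)^2 + c * (d i)^2 := by
    intro i
    nlinarith [mul_nonneg hc.le (sq_nonneg ((g i:ℝ) + 2 * d i))]
  have hs := Finset.sum_le_sum (fun i (_ : i ∈ Finset.univ) => key i)
  simp only [Finset.sum_add_distrib, ← Finset.mul_sum] at hs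
  have e1 : ∑ i : Fin n, c/2 * ((g i:ℝ))^2 = c/2 * ∑ i, ((g i:ℝ))^2 := by
    rw [Finset.mul_sum]
  linarith [hs, e1]

lemma aux_zval : ∀ x y : ZMod 2, (((x+y).val : ℤ)) = x.val + y.val - 2*((x.val : ℤ) * y.val) := by
  decide

lemma aux_zvalC (x y : ZMod 2) :
    (((x+y).val : ℂ)) = (x.val : ℂ) + y.val - 2*((x.val : ℂ) * y.val) := by
  exact_mod_cast aux_zval x y

lemma aux_val_inj : ∀ x y : ZMod 2, x.val = y.val → x = y := by decide

/-- The reindexing map `(a, (G, H)) ↦ (g, h)`. -/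
def aux_phi (n : ℕ) (m1 : Fin n → ZMod 2)
    (q : (Fin n → ZMod 2) × ((Fin n → ℤ) × (Fin n → ℤ))) : (Fin n → ℤ) × (Fin n → ℤ) :=
  (fun i => q.2.1 i + q.2.2 i + ((q.1 i).val : ℤ) * (1 - ((m1 i).val : ℤ)),
   fun i => q.2.1 i - q.2.2 i - ((q.1 i).val : ℤ) * ((m1 i).val : ℤ))

lemma aux_phi_bij (n : ℕ) (m1 : Fin n → ZMod 2) : Function.Bijective (aux_phi n m1) := by
  constructor
  · rintro ⟨a, G, H⟩ ⟨a', G', H'⟩ h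
    have h1 := congrArg Prod.fst h
    have h2 := congrArg Prod.snd h
    simp only [aux_phi] at h1 h2
    have key : ∀ i, (a i).val = (a' i).val ∧ G i = G' i ∧ H i = H' i := by
      intro i
      have e1 := congrFun h1 i
      have e2 := congrFun h2 i
      have hp : (a i).val < 2 := ZMod.val_lt _
      have hp' : (a' i).val < 2 := ZMod.val_lt _
      have hq : (m1 i).val < 2 := ZMod.val_lt _
      have hq01 : (m1 i).val = 0 ∨ (m1 i).val = 1 := by omega
      rcases hq01 with h0 | h0 <;> rw [h0] at e1 e2 <;> push_cast at e1 e2 <;>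
        exact ⟨by omega, by omega, by omega⟩
    simp only [Prod.mk.injEq]
    exact ⟨funext fun i => aux_val_inj _ _ (key i).1,
      funext fun i => (key i).2.1, funext fun i => (key i).2.2⟩
  · rintro ⟨g, h⟩
    set a : Fin n → ZMod 2 := fun i => ((g i + h i : ℤ) : ZMod 2) with ha
    have hdvd : ∀ i, (2:ℤ) ∣ (g i + h i - ((a i).val : ℤ)) := by
      intro i
      have hcast : ((g i + h i - ((a i).val : ℤ) : ℤ) : ZMod 2) = 0 := by
        push_cast
        rw [ZMod.natCast_val, ZMod.cast_id]
        simp [ha]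
      have hd := (ZMod.intCast_zmod_eq_zero_iff_dvd _ 2).1 hcast
      exact_mod_cast hd
    refine ⟨⟨a, fun i => (g i + h i - ((a i).val:ℤ))/2 + ((a i).val:ℤ)*((m1 i).val:ℤ),
      fun i => (g i - h i - ((a i).val:ℤ))/2⟩, ?_⟩
    have hcomp : ∀ i,
        ((g i + h i - ((a i).val:ℤ))/2 + ((a i).val:ℤ)*((m1 i).val:ℤ))
          + (g i - h i - ((a i).val:ℤ))/2 + ((a i).val:ℤ) * (1 - ((m1 i).val:ℤ)) = g i ∧
        ((g i + h i - ((a i).val:ℤ))/2 + ((a i).val:ℤ)*((m1 i).val:ℤ))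
          - (g i - h i - ((a i).val:ℤ))/2 - ((a i).val:ℤ) * ((m1 i).val:ℤ) = h i := by
      intro i
      obtain ⟨k, hk⟩ := hdvd i
      have hp : (a i).val < 2 := ZMod.val_lt _
      have hq : (m1 i).val < 2 := ZMod.val_lt _
      have hq01 : (m1 i).val = 0 ∨ (m1 i).val = 1 := by omega
      rcases hq01 with h0 | h0 <;> rw [h0] <;> push_cast <;> constructor <;> omega
    simp only [aux_phi, Prod.mk.injEq]
    exact ⟨funext fun i => (hcomp i).1, funext fun i => (hcomp i).2⟩

lemma aux_key (n : ℕ) (m : (Fin n → ZMod 2) × (Fin n → ZMod 2))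
    (hm : (∑ i, (m.1 i).val * (m.2 i).val) % 2 = 0)
    (Z : Matrix (Fin n) (Fin n) ℂ) (a : Fin n → ZMod 2) (G H : Fin n → ℤ) :
    thetaFirstTerm n m Z (fun i => G i + H i + ((a i).val:ℤ) * (1 - ((m.1 i).val:ℤ))) *
      thetaFirstTerm n m Z (fun i => G i - H i - ((a i).val:ℤ) * ((m.1 i).val:ℤ)) =
    (-1:ℂ) ^ (∑ i, (a i).val * (m.2 i).val) *
      (thetaTerm n (a + m.1) Z G * thetaTerm n a Z H) := by
  set u := thetaVec n (a + m.1) G with hu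
  set v := thetaVec n a H with hv
  have hx : thetaVec n m.1 (fun i => G i + H i + ((a i).val:ℤ) * (1 - ((m.1 i).val:ℤ)))
      = u + v := by
    funext i
    simp only [thetaVec, hu, hv, Pi.add_apply]
    rw [aux_zvalC (a i) (m.1 i)]
    push_cast
    ring
  have hy : thetaVec n m.1 (fun i => G i - H i - ((a i).val:ℤ) * ((m.1 i).val:ℤ))
      = u - v := by
    funext i
    simp only [thetaVec, hu, hv, Pi.sub_apply, Pi.add_apply]
    rw [aux_zvalC (a i) (m.1 i)]
    push_cast
    ring
  rw [thetaFirstTerm, thetaFirstTerm, hx, hy, ← Complex.exp_add]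
  have hquad : ((u + v) ⬝ᵥ Z.mulVec (u + v)) + ((u - v) ⬝ᵥ Z.mulVec (u - v))
      = 2*(u ⬝ᵥ Z.mulVec u) + 2*(v ⬝ᵥ Z.mulVec v) := by
    simp only [Matrix.mulVec_add, Matrix.mulVec_sub, dotProduct_add, dotProduct_sub,
      add_dotProduct, sub_dotProduct]
    ring
  have hlin : (∑ i, (u + v) i * ((m.2 i).val : ℂ)) + (∑ i, (u - v) i * ((m.2 i).val : ℂ))
      = 2 * ∑ i, u i * ((m.2 i).val : ℂ) := by
    simp only [Pi.add_apply, Pi.sub_apply]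
    rw [← Finset.sum_add_distrib, Finset.mul_sum]
    exact Finset.sum_congr rfl fun i _ => by ring
  set N1 : ℤ := ∑ i, G i * ((m.2 i).val : ℤ) with hN1
  set N2 : ℕ := ∑ i, ((a i + m.1 i).val * (m.2 i).val) with hN2
  have husum : ∑ i, u i * ((m.2 i).val : ℂ) = (N1:ℂ) + (N2:ℂ)/2 := by
    have hN1c : (N1:ℂ) = ∑ i, (G i:ℂ)*((m.2 i).val:ℂ) := by rw [hN1]; push_cast; rfl
    have hN2c : (N2:ℂ) = ∑ i, ((a i + m.1 i).val:ℂ)*((m.2 i).val:ℂ) := by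
      rw [hN2]; push_cast; rfl
    rw [hN1c, hN2c]
    simp only [hu, thetaVec, Pi.add_apply]
    rw [Finset.sum_div, ← Finset.sum_add_distrib]
    exact Finset.sum_congr rfl fun i _ => by ring
  have hexp : (Real.pi:ℂ) * I * (((u + v) ⬝ᵥ Z.mulVec (u + v)) + ∑ i, (u + v) i * ((m.2 i).val : ℂ))
      + (Real.pi:ℂ) * I * (((u - v) ⬝ᵥ Z.mulVec (u - v)) + ∑ i, (u - v) i * ((m.2 i).val : ℂ))
      = (2 * (Real.pi:ℂ) * I * (u ⬝ᵥ Z.mulVec u) + 2 * (Real.pi:ℂ) * I * (v ⬝ᵥ Z.mulVec v))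
        + ((N1:ℂ) * (2 * (Real.pi:ℂ) * I) + (N2:ℂ) * ((Real.pi:ℂ) * I)) := by
    linear_combination (Real.pi:ℂ)*I*hquad + (Real.pi:ℂ)*I*hlin + 2*(Real.pi:ℂ)*I*husum
  rw [hexp, Complex.exp_add, Complex.exp_add, Complex.exp_add]
  rw [Complex.exp_int_mul_two_pi_mul_I N1]
  have hD : Complex.exp ((N2:ℂ) * ((Real.pi:ℂ) * I)) = (-1:ℂ)^(N2:ℕ) := by
    have : ((N2:ℕ):ℂ) = (((N2:ℕ):ℤ):ℂ) := by push_cast; rfl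
    rw [this, Complex.exp_int_mul, Complex.exp_pi_mul_I, zpow_natCast]
  rw [hD]
  have hsign : (-1:ℂ)^(N2:ℕ) = (-1:ℂ)^(∑ i, (a i).val * (m.2 i).val) := by
    have hz : ((N2:ℕ):ℤ) = ((∑ i, (a i).val * (m.2 i).val : ℕ):ℤ)
        + ((∑ i, (m.1 i).val * (m.2 i).val : ℕ):ℤ)
        - 2 * ((∑ i, ((a i).val * (m.1 i).val) * (m.2 i).val : ℕ):ℤ) := by
      rw [hN2]
      push_cast
      rw [← Finset.sum_add_distrib, Finset.mul_sum, ← Finset.sum_sub_distrib]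
      refine Finset.sum_congr rfl fun i _ => ?_
      have hzz := aux_zval (a i) (m.1 i)
      push_cast at hzz
      linear_combination ((m.2 i).val:ℤ) * hzz
    have hmod : N2 % 2 = (∑ i, (a i).val * (m.2 i).val) % 2 := by omega
    rcases Nat.even_or_odd (∑ i, (a i).val * (m.2 i).val) with he | ho
    · have hN2e : Even N2 := by
        rw [Nat.even_iff] at he ⊢
        omega
      rw [hN2e.neg_one_pow, he.neg_one_pow]
    · have hN2o : Odd N2 := by
        rw [Nat.odd_iff] at ho ⊢
        omega
      rw [hN2o.neg_one_pow, ho.neg_one_pow]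
  rw [hsign, thetaTerm, thetaTerm, ← hu, ← hv]
  ring

end Aux

/-- For every even characteristic `m = (m¹, m²)` the square of the theta constant of
the first kind is `θ[m](Z)² = Σ_{a ∈ 𝔽₂ⁿ} (−1)^⟨a,m²⟩ f_{a+m¹}(Z) f_a(Z)`. -/
theorem thetaFirst_sq_eq_sum_thetaSecond (n : ℕ)
    (m : (Fin n → ZMod 2) × (Fin n → ZMod 2))
    (hm : (∑ i, (m.1 i).val * (m.2 i).val) % 2 = 0) :
    ∀ Z ∈ Siegel n,
      (thetaFirst n m Z) ^ 2 =
        ∑ a : Fin n → ZMod 2,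
          (-1 : ℂ) ^ (∑ i, (a i).val * (m.2 i).val) *
            (thetaSecond n (a + m.1) Z * thetaSecond n a Z) := by
  intro Z hZ
  obtain ⟨hsymm, hpos⟩ := hZ
  obtain ⟨c, hc, hbound⟩ := aux_posdef_bound n (Matrix.of fun i j => (Z i j).im) hpos
  -- norm formulas
  have hnorm2 : ∀ (a : Fin n → ZMod 2) (g : Fin n → ℤ), ‖thetaTerm n a Z g‖ =
      Real.exp (-(2*Real.pi) *
        (rVec n a g ⬝ᵥ (Matrix.of fun i j => (Z i j).im).mulVec (rVec n a g))) := by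
    intro a g
    rw [thetaTerm, Complex.norm_exp]
    congr 1
    have hveq : thetaVec n a g = fun i => ((rVec n a g i : ℝ) : ℂ) :=
      funext (aux_thetaVec_eq n a g)
    rw [hveq, aux_re_two_pi_I, aux_im_quad]
  have hnorm1 : ∀ g : Fin n → ℤ, ‖thetaFirstTerm n m Z g‖ =
      Real.exp (-Real.pi *
        (rVec n m.1 g ⬝ᵥ (Matrix.of fun i j => (Z i j).im).mulVec (rVec n m.1 g))) := by
    intro g
    rw [thetaFirstTerm, Complex.norm_exp]
    congr 1
    have hveq : thetaVec n m.1 g = fun i => ((rVec n m.1 g i : ℝ) : ℂ) :=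
      funext (aux_thetaVec_eq n m.1 g)
    rw [hveq, aux_re_pi_I, Complex.add_im, aux_im_quad, aux_im_lin, add_zero]
  -- summability
  have hsummaster : ∀ (t : ℝ), 0 < t → ∀ (a : Fin n → ZMod 2),
      Summable (fun g : Fin n → ℤ => Real.exp (-t * ∑ i, (rVec n a g i)^2)) := by
    intro t ht a
    exact aux_summable_shift n t ht (fun i => ((a i).val : ℝ)/2)
  have hsn2 : ∀ a : Fin n → ZMod 2, Summable (fun g => ‖thetaTerm n a Z g‖) := by
    intro a
    refine Summable.of_nonneg_of_le (fun _ => norm_nonneg _) (fun g => ?_)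
      (hsummaster (2*Real.pi*c) (by positivity) a)
    rw [hnorm2 a g]
    apply Real.exp_le_exp.2
    have hb := hbound (rVec n a g)
    nlinarith [mul_le_mul_of_nonneg_left hb (by positivity : (0:ℝ) ≤ 2*Real.pi)]
  have hsn1 : Summable (fun g => ‖thetaFirstTerm n m Z g‖) := by
    refine Summable.of_nonneg_of_le (fun _ => norm_nonneg _) (fun g => ?_)
      (hsummaster (Real.pi*c) (by positivity) m.1)
    rw [hnorm1 g]
    apply Real.exp_le_exp.2
    have hb := hbound (rVec n m.1 g)
    nlinarith [mul_le_mul_of_nonneg_left hb (Real.pi_pos.le)]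
  -- step 1: square as a double sum
  rw [sq, thetaFirst, tsum_mul_tsum_of_summable_norm hsn1 hsn1]
  -- step 2: reindex
  have hF : Summable (fun p : (Fin n → ℤ) × (Fin n → ℤ) =>
      thetaFirstTerm n m Z p.1 * thetaFirstTerm n m Z p.2) :=
    summable_mul_of_summable_norm hsn1 hsn1
  set e := Equiv.ofBijective _ (aux_phi_bij n m.1) with he
  rw [← Equiv.tsum_eq e (fun p : (Fin n → ℤ) × (Fin n → ℤ) =>
    thetaFirstTerm n m Z p.1 * thetaFirstTerm n m Z p.2)]
  have heq : ∀ q : (Fin n → ZMod 2) × ((Fin n → ℤ) × (Fin n → ℤ)),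
      thetaFirstTerm n m Z (e q).1 * thetaFirstTerm n m Z (e q).2
        = (-1:ℂ) ^ (∑ i, (q.1 i).val * (m.2 i).val) *
          (thetaTerm n (q.1 + m.1) Z q.2.1 * thetaTerm n q.1 Z q.2.2) := by
    intro q
    exact aux_key n m hm Z q.1 q.2.1 q.2.2
  rw [tsum_congr heq]
  have hsum' : Summable (fun q : (Fin n → ZMod 2) × ((Fin n → ℤ) × (Fin n → ℤ)) =>
      (-1:ℂ) ^ (∑ i, (q.1 i).val * (m.2 i).val) *
        (thetaTerm n (q.1 + m.1) Z q.2.1 * thetaTerm n q.1 Z q.2.2)) :=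
    ((e.summable_iff).2 hF).congr heq
  rw [Summable.tsum_prod' hsum' (fun b => hsum'.prod_factor b), tsum_fintype]
  refine Finset.sum_congr rfl fun a _ => ?_
  dsimp only
  rw [tsum_mul_left]
  congr 1
  rw [thetaSecond, thetaSecond, tsum_mul_tsum_of_summable_norm (hsn2 _) (hsn2 _)]

end
end

section
/- For genus n = 2, the four theta constants of the second kind f₀, f₁, f₂, f₃ have no common zero on the Siegel upper half-space H₂. -/
open Complex Matrix

noncomputable section

attribute [local instance] Matrix.normedAddCommGroup Matrix.normedSpace

namespace ThetaAux

/-- The quadratic form attached to `Z`. -/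
def Q (Z : Matrix (Fin 2) (Fin 2) ℂ) (v : Fin 2 → ℂ) : ℂ := v ⬝ᵥ Z.mulVec v

lemma Q_expand (Z : Matrix (Fin 2) (Fin 2) ℂ) (v : Fin 2 → ℂ) :
    Q Z v = v 0 * (Z 0 0 * v 0 + Z 0 1 * v 1) + v 1 * (Z 1 0 * v 0 + Z 1 1 * v 1) := by
  simp [Q, dotProduct, Matrix.mulVec, Fin.sum_univ_two]

/-- A term of the classical theta series. -/
def bb (Z : Matrix (Fin 2) (Fin 2) ℂ) (g : Fin 2 → ℤ) : ℂ :=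
  Complex.exp ((Real.pi : ℂ) * Complex.I * Q Z (fun i => (g i : ℂ)))

/-- A character term. -/
def e1 (k : ℤ) (t : ℝ) : ℂ := Complex.exp (2 * (Real.pi : ℂ) * Complex.I * k * t)

/-- A term of the classical theta series on `ℝ²`. -/
def term (Z : Matrix (Fin 2) (Fin 2) ℂ) (w : Fin 2 → ℝ) (g : Fin 2 → ℤ) : ℂ :=
  bb Z g * (e1 (g 0) (w 0) * e1 (g 1) (w 1))

section Main

variable {Z : Matrix (Fin 2) (Fin 2) ℂ}

/-- Key convolution identity term-wise. -/
lemma key_identity (Z : Matrix (Fin 2) (Fin 2) ℂ) (p g : Fin 2 → ℤ) :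
    bb Z g * bb Z (p - g) =
      Complex.exp ((Real.pi : ℂ) * Complex.I / 2 * Q Z (fun i => (p i : ℂ))) *
        thetaTerm 2 (fun i => (p i : ZMod 2)) Z
          (g - (fun i => p i / 2) - fun i => (((p i : ZMod 2)).val : ℤ)) := by
  have hvalZ : ∀ i, ((((p i : ZMod 2)).val : ℤ)) = p i % 2 := fun i => ZMod.val_intCast _
  have hpZ : ∀ i, (2 : ℤ) * (p i / 2) + (((p i : ZMod 2)).val : ℤ) = p i := by
    intro i; rw [hvalZ]; exact Int.mul_ediv_add_emod (p i) 2
  have hp : ∀ i, ((p i : ℂ)) = 2 * ((p i / 2 : ℤ) : ℂ) + ((((p i : ZMod 2)).val : ℤ) : ℂ) := by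
    intro i; exact_mod_cast congrArg (fun x : ℤ => (x : ℂ)) (hpZ i).symm
  have hv : thetaVec 2 (fun i => (p i : ZMod 2))
      (g - (fun i => p i / 2) - fun i => (((p i : ZMod 2)).val : ℤ))
      = fun i => (g i : ℂ) - ((p i / 2 : ℤ) : ℂ) - ((((p i : ZMod 2)).val : ℤ) : ℂ) / 2 := by
    funext i
    simp only [thetaVec, Pi.sub_apply, Int.cast_sub]
    push_cast
    ring
  rw [thetaTerm, hv, bb, bb, ← Complex.exp_add, ← Complex.exp_add]
  congr 1
  have e1 : (fun i => (p i : ℂ)) ⬝ᵥ Z.mulVec (fun i => (p i : ℂ))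
      = Q Z (fun i => (p i : ℂ)) := rfl
  have e2 : ∀ v : Fin 2 → ℂ, v ⬝ᵥ Z.mulVec v = Q Z v := fun _ => rfl
  simp only [e2, Q_expand, Pi.sub_apply, Int.cast_sub]
  rw [hp 0, hp 1]
  ring

/-- The convolution square of `bb` vanishes if all theta constants vanish. -/
lemma conv_zero (h : ∀ a : Fin 2 → ZMod 2, thetaSecond 2 a Z = 0) (p : Fin 2 → ℤ) :
    ∑' g : Fin 2 → ℤ, bb Z g * bb Z (p - g) = 0 := by
  set a : Fin 2 → ZMod 2 := fun i => (p i : ZMod 2) with ha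
  set k : Fin 2 → ℤ := (fun i => p i / 2) + fun i => ((a i).val : ℤ) with hk
  have step : ∀ g, bb Z g * bb Z (p - g)
      = Complex.exp ((Real.pi : ℂ) * Complex.I / 2 * Q Z (fun i => (p i : ℂ))) *
          thetaTerm 2 a Z (g - k) := by
    intro g
    rw [key_identity Z p g, sub_sub]
  rw [tsum_congr step, tsum_mul_left]
  have he := (Equiv.subRight k).tsum_eq (thetaTerm 2 a Z)
  simp only [Equiv.subRight_apply] at he
  rw [he]
  have : (∑' m : Fin 2 → ℤ, thetaTerm 2 a Z m) = thetaSecond 2 a Z := rfl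
  rw [this, h a, mul_zero]

lemma norm_bb (g : Fin 2 → ℤ) :
    ‖bb Z g‖ = Real.exp (-(Real.pi * (Q Z (fun i => (g i : ℂ))).im)) := by
  rw [bb, Complex.norm_exp]
  congr 1
  simp [Complex.mul_re, Complex.mul_im]

set_option maxHeartbeats 1000000 in
lemma summable_norm_bb (hZ : Z ∈ Siegel 2) :
    Summable fun g : Fin 2 → ℤ => ‖bb Z g‖ := by
  obtain ⟨hsym, hpos⟩ := hZ
  set α := (Z 0 0).im with hα'
  set β := (Z 0 1).im with hβ'
  set γ := (Z 1 1).im with hγ'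
  have hββ : (Z 1 0).im = β := by
    have := congrFun (congrFun hsym 0) 1
    rw [Matrix.transpose_apply] at this
    rw [this]
  have hquad : ∀ x : Fin 2 → ℝ, x ≠ 0 →
      0 < α * x 0 ^ 2 + 2 * β * (x 0) * (x 1) + γ * x 1 ^ 2 := by
    intro x hx
    have := hpos.dotProduct_mulVec_pos hx
    simp only [star_trivial, dotProduct, Matrix.mulVec, Fin.sum_univ_two,
      Matrix.of_apply] at this
    rw [hββ, ← hα', ← hβ', ← hγ'] at this
    nlinarith [this]
  have hα : 0 < α := by
    have h10 : (![1, 0] : Fin 2 → ℝ) ≠ 0 := by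
      intro h
      have := congrFun h 0
      norm_num at this
    have := hquad ![1, 0] h10
    norm_num at this
    linarith
  have hγ : 0 < γ := by
    have h01 : (![0, 1] : Fin 2 → ℝ) ≠ 0 := by
      intro h
      have := congrFun h 1
      norm_num at this
    have := hquad ![0, 1] h01
    norm_num at this
    linarith
  have hdet : 0 < α * γ - β ^ 2 := by
    rcases eq_or_ne β 0 with hb | hb
    · rw [hb]; nlinarith
    · have hne : (![γ, -β] : Fin 2 → ℝ) ≠ 0 := by
        intro h
        have := congrFun h 0
        norm_num at this
        linarith
      have := hquad ![γ, -β] hne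
      norm_num at this
      nlinarith
  set δ := (α * γ - β ^ 2) / (α + γ) with hδ'
  have hδ : 0 < δ := div_pos hdet (by linarith)
  have hbound : ∀ x0 x1 : ℝ, δ * (x0 ^ 2 + x1 ^ 2) ≤
      α * x0 ^ 2 + 2 * β * x0 * x1 + γ * x1 ^ 2 := by
    intro x0 x1
    rw [hδ', div_mul_eq_mul_div, div_le_iff₀ (by linarith)]
    nlinarith [sq_nonneg (α * x0 + β * x1), sq_nonneg (β * x0 + γ * x1)]
  set c := Real.pi * δ with hc'
  have hc : 0 < c := mul_pos Real.pi_pos hδ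
  -- one-dimensional summability
  have h1d : Summable fun k : ℤ => Real.exp (-(c * (k : ℝ) ^ 2)) := by
    have hnat : Summable fun n : ℕ => Real.exp (-(c * (n : ℝ) ^ 2)) := by
      refine Summable.of_nonneg_of_le (fun n => (Real.exp_pos _).le) (fun n => ?_)
        (summable_geometric_of_lt_one (Real.exp_pos (-c)).le
          (Real.exp_lt_one_iff.mpr (by linarith)))
      rw [← Real.exp_nat_mul]
      apply Real.exp_le_exp.mpr
      have h1 : (n : ℝ) ≤ (n : ℝ) ^ 2 := by
        rcases Nat.eq_zero_or_pos n with h | h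
        · simp [h]
        · have : (1 : ℝ) ≤ (n : ℝ) := by exact_mod_cast h
          nlinarith
      nlinarith
    apply Summable.of_nat_of_neg <;> · simpa using hnat
  have hprod : Summable fun q : ℤ × ℤ =>
      Real.exp (-(c * (q.1 : ℝ) ^ 2)) * Real.exp (-(c * (q.2 : ℝ) ^ 2)) :=
    h1d.mul_of_nonneg h1d (fun _ => (Real.exp_pos _).le) (fun _ => (Real.exp_pos _).le)
  have hM : Summable fun g : Fin 2 → ℤ =>
      Real.exp (-(c * (g 0 : ℝ) ^ 2)) * Real.exp (-(c * (g 1 : ℝ) ^ 2)) :=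
    (Equiv.summable_iff (piFinTwoEquiv fun _ => ℤ)).mpr hprod
  refine Summable.of_nonneg_of_le (fun _ => norm_nonneg _) (fun g => ?_) hM
  rw [norm_bb, ← Real.exp_add]
  apply Real.exp_le_exp.mpr
  have hIm : (Q Z (fun i => (g i : ℂ))).im =
      α * (g 0 : ℝ) ^ 2 + 2 * β * (g 0 : ℝ) * (g 1 : ℝ) + γ * (g 1 : ℝ) ^ 2 := by
    rw [Q_expand]
    simp [Complex.add_im, Complex.mul_im, Complex.mul_re, hββ]
    ring
  rw [hIm]
  have := hbound (g 0 : ℝ) (g 1 : ℝ)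
  have hπ := Real.pi_pos
  nlinarith

lemma norm_e1 (k : ℤ) (t : ℝ) : ‖e1 k t‖ = 1 := by
  rw [e1, Complex.norm_exp]
  have : (2 * (Real.pi : ℂ) * Complex.I * k * t).re = 0 := by
    simp [Complex.mul_re, Complex.mul_im]
  rw [this, Real.exp_zero]

lemma norm_term (w : Fin 2 → ℝ) (g : Fin 2 → ℤ) : ‖term Z w g‖ = ‖bb Z g‖ := by
  rw [term, norm_mul, norm_mul, norm_e1, norm_e1, mul_one, mul_one]

lemma e1_mul (a b : ℤ) (t : ℝ) : e1 a t * e1 b t = e1 (a + b) t := by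
  rw [e1, e1, e1, ← Complex.exp_add]
  congr 1
  push_cast
  ring

lemma theta_fun_zero (hZ : Z ∈ Siegel 2)
    (h : ∀ a : Fin 2 → ZMod 2, thetaSecond 2 a Z = 0) (w : Fin 2 → ℝ) :
    ∑' g : Fin 2 → ℤ, term Z w g = 0 := by
  have hb := summable_norm_bb hZ
  have hs : Summable fun g : Fin 2 → ℤ => ‖term Z w g‖ := by
    simpa only [norm_term] using hb
  have hmul : (∑' g : Fin 2 → ℤ, term Z w g) * (∑' g : Fin 2 → ℤ, term Z w g)
      = ∑' z : (Fin 2 → ℤ) × (Fin 2 → ℤ), term Z w z.1 * term Z w z.2 :=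
    tsum_mul_tsum_of_summable_norm hs hs
  have hF : Summable fun z : (Fin 2 → ℤ) × (Fin 2 → ℤ) => term Z w z.1 * term Z w z.2 :=
    (hs.mul_norm hs).of_norm
  let E : ((Fin 2 → ℤ) × (Fin 2 → ℤ)) ≃ ((Fin 2 → ℤ) × (Fin 2 → ℤ)) :=
    { toFun := fun z => (z.2, z.1 - z.2)
      invFun := fun z => (z.1 + z.2, z.1)
      left_inv := fun z => by simp
      right_inv := fun z => by simp }
  have hE : (∑' z : (Fin 2 → ℤ) × (Fin 2 → ℤ), term Z w z.1 * term Z w z.2)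
      = ∑' z : (Fin 2 → ℤ) × (Fin 2 → ℤ), term Z w (E z).1 * term Z w (E z).2 :=
    (E.tsum_eq fun z => term Z w z.1 * term Z w z.2).symm
  have hFE : Summable fun z : (Fin 2 → ℤ) × (Fin 2 → ℤ) =>
      term Z w (E z).1 * term Z w (E z).2 := E.summable_iff.mpr hF
  have hprod := Summable.tsum_prod hFE
  have hin : ∀ p : Fin 2 → ℤ,
      (∑' g : Fin 2 → ℤ, term Z w (E (p, g)).1 * term Z w (E (p, g)).2) = 0 := by
    intro p
    have hterm : ∀ g : Fin 2 → ℤ, term Z w (E (p, g)).1 * term Z w (E (p, g)).2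
        = (bb Z g * bb Z (p - g)) * (e1 (p 0) (w 0) * e1 (p 1) (w 1)) := by
      intro g
      have hEpg : E (p, g) = (g, p - g) := rfl
      rw [hEpg]
      have h0 : g 0 + (p - g) 0 = p 0 := by simp
      have h1 : g 1 + (p - g) 1 = p 1 := by simp
      calc term Z w g * term Z w (p - g)
          = (bb Z g * bb Z (p - g)) *
            ((e1 (g 0) (w 0) * e1 ((p - g) 0) (w 0)) *
              (e1 (g 1) (w 1) * e1 ((p - g) 1) (w 1))) := by
            rw [term, term]; ring
        _ = (bb Z g * bb Z (p - g)) * (e1 (p 0) (w 0) * e1 (p 1) (w 1)) := by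
            rw [e1_mul, e1_mul, h0, h1]
    rw [tsum_congr hterm, tsum_mul_right, conv_zero h p, zero_mul]
  have : (∑' g : Fin 2 → ℤ, term Z w g) * (∑' g : Fin 2 → ℤ, term Z w g) = 0 := by
    rw [hmul, hE, hprod, tsum_congr hin, tsum_zero]
  exact mul_self_eq_zero.mp this

lemma integral_theta (hZ : Z ∈ Siegel 2) :
    ∫ w : Fin 2 → ℝ in (Set.univ.pi fun _ => Set.Ioc (0:ℝ) 1),
      ∑' g : Fin 2 → ℤ, term Z w g = 1 := by
  set B : Set (Fin 2 → ℝ) := Set.univ.pi fun _ => Set.Ioc (0:ℝ) 1 with hB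
  have hmeas : MeasurableSet B := MeasurableSet.univ_pi fun _ => measurableSet_Ioc
  have hvol : MeasureTheory.volume B = 1 := by
    rw [hB, MeasureTheory.volume_pi_pi]
    simp [Real.volume_Ioc]
  haveI hfin : MeasureTheory.IsFiniteMeasure (MeasureTheory.volume.restrict B) :=
    ⟨by rw [MeasureTheory.Measure.restrict_apply_univ, hvol]; exact ENNReal.one_lt_top⟩
  -- continuity of each term
  have hcont : ∀ g : Fin 2 → ℤ, Continuous fun w : Fin 2 → ℝ => term Z w g := by
    intro g
    apply Continuous.mul continuous_const
    apply Continuous.mul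
    · exact Complex.continuous_exp.comp (Continuous.mul continuous_const
        (Complex.continuous_ofReal.comp (continuous_apply 0)))
    · exact Complex.continuous_exp.comp (Continuous.mul continuous_const
        (Complex.continuous_ofReal.comp (continuous_apply 1)))
  have hint : ∀ g : Fin 2 → ℤ, MeasureTheory.Integrable (fun w => term Z w g)
      (MeasureTheory.volume.restrict B) := by
    intro g
    refine MeasureTheory.Integrable.mono' (MeasureTheory.integrable_const ‖bb Z g‖)
      ((hcont g).aestronglyMeasurable) ?_
    filter_upwards with w
    rw [norm_term]
  have hnormint : Summable fun g : Fin 2 → ℤ =>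
      ∫ w in B, ‖term Z w g‖ := by
    refine (summable_norm_bb hZ).congr fun g => ?_
    have : ∀ w : Fin 2 → ℝ, ‖term Z w g‖ = ‖bb Z g‖ := fun w => norm_term w g
    rw [MeasureTheory.setIntegral_congr_fun hmeas fun w _ => this w]
    rw [MeasureTheory.setIntegral_const, MeasureTheory.measureReal_def, hvol]
    simp
  rw [← MeasureTheory.integral_tsum_of_summable_integral_norm hint hnormint]
  -- compute each integral
  have hone : ∀ k : ℤ, (∫ t in (0:ℝ)..1, e1 k t) = if k = 0 then 1 else 0 := by
    intro k
    rcases eq_or_ne k 0 with hk | hk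
    · rw [hk]
      have : ∀ t : ℝ, e1 0 t = 1 := by intro t; rw [e1]; simp
      simp only [this]
      simp
    · have hc : (2 * (Real.pi : ℂ) * Complex.I * (k : ℂ)) ≠ 0 :=
        mul_ne_zero (mul_ne_zero (mul_ne_zero two_ne_zero
          (Complex.ofReal_ne_zero.mpr Real.pi_ne_zero)) Complex.I_ne_zero)
          (Int.cast_ne_zero.mpr hk)
      have hval : (∫ t in (0:ℝ)..1, Complex.exp ((2 * (Real.pi : ℂ) * Complex.I * (k : ℂ)) * t))
          = (Complex.exp ((2 * (Real.pi : ℂ) * Complex.I * (k : ℂ)) * 1)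
              - Complex.exp ((2 * (Real.pi : ℂ) * Complex.I * (k : ℂ)) * 0)) /
                (2 * (Real.pi : ℂ) * Complex.I * (k : ℂ)) :=
        integral_exp_mul_complex hc
      have hexp1 : Complex.exp ((2 * (Real.pi : ℂ) * Complex.I * (k : ℂ)) * 1) = 1 := by
        rw [mul_one]
        have : (2 * (Real.pi : ℂ) * Complex.I * (k : ℂ)) = (k : ℂ) * (2 * Real.pi * Complex.I) := by
          ring
        rw [this]
        exact Complex.exp_int_mul_two_pi_mul_I k
      have heq : ∀ t : ℝ, e1 k t = Complex.exp ((2 * (Real.pi : ℂ) * Complex.I * (k : ℂ)) * t) := by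
        intro t; rw [e1]
      simp only [heq]
      rw [hval, hexp1]
      simp [hk]
  have hIg : ∀ g : Fin 2 → ℤ, (∫ w in B, term Z w g) = if g = 0 then 1 else 0 := by
    intro g
    have hsplit : (∫ w in B, term Z w g)
        = bb Z g * ∫ w in B, e1 (g 0) (w 0) * e1 (g 1) (w 1) := by
      have : (∫ w in B, term Z w g)
          = ∫ w in B, bb Z g * (e1 (g 0) (w 0) * e1 (g 1) (w 1)) := rfl
      rw [this]
      exact MeasureTheory.integral_const_mul _ _
    have hindic : (Set.indicator B fun w : Fin 2 → ℝ => e1 (g 0) (w 0) * e1 (g 1) (w 1))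
        = fun w : Fin 2 → ℝ => ∏ i : Fin 2,
            Set.indicator (Set.Ioc (0:ℝ) 1) (fun t => e1 (g i) t) (w i) := by
      funext w
      have hmem : w ∈ B ↔ (w 0 ∈ Set.Ioc (0:ℝ) 1 ∧ w 1 ∈ Set.Ioc (0:ℝ) 1) := by
        rw [hB, Set.mem_univ_pi]
        exact Fin.forall_fin_two
      rw [Fin.prod_univ_two]
      by_cases h0 : w 0 ∈ Set.Ioc (0:ℝ) 1 <;> by_cases h1 : w 1 ∈ Set.Ioc (0:ℝ) 1 <;>
        simp [Set.indicator, hmem, h0, h1]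
    have hbox : (∫ w in B, e1 (g 0) (w 0) * e1 (g 1) (w 1))
        = ∏ i : Fin 2, ∫ t : ℝ, Set.indicator (Set.Ioc (0:ℝ) 1) (fun s => e1 (g i) s) t := by
      rw [← MeasureTheory.integral_indicator hmeas, hindic]
      have := MeasureTheory.integral_fintype_prod_eq_prod (𝕜 := ℂ) (ι := Fin 2) (μ := fun _ => MeasureTheory.volume)
        (f := fun i (t : ℝ) => Set.indicator (Set.Ioc (0:ℝ) 1) (fun s => e1 (g i) s) t)
      simpa [← MeasureTheory.volume_pi] using this
    have hfac : ∀ i : Fin 2, (∫ t : ℝ, Set.indicator (Set.Ioc (0:ℝ) 1) (fun s => e1 (g i) s) t)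
        = if g i = 0 then 1 else 0 := by
      intro i
      rw [MeasureTheory.integral_indicator measurableSet_Ioc,
        ← intervalIntegral.integral_of_le (zero_le_one)]
      exact hone (g i)
    rw [hsplit, hbox, Fin.prod_univ_two, hfac 0, hfac 1]
    by_cases hg0 : g 0 = 0 <;> by_cases hg1 : g 1 = 0
    · have hg : g = 0 := by
        funext i
        fin_cases i <;> assumption
      have hbb0 : bb Z 0 = 1 := by
        rw [bb]
        have : Q Z (fun i => ((0 : Fin 2 → ℤ) i : ℂ)) = 0 := by
          rw [Q_expand]; simp
        rw [this, mul_zero, Complex.exp_zero]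
      simp [hg, hg0, hg1, hbb0]
    · have hg : g ≠ 0 := fun h => hg1 (by rw [h]; rfl)
      simp [hg, hg0, hg1]
    · have hg : g ≠ 0 := fun h => hg0 (by rw [h]; rfl)
      simp [hg, hg0, hg1]
    · have hg : g ≠ 0 := fun h => hg0 (by rw [h]; rfl)
      simp [hg, hg0, hg1]
  rw [tsum_congr hIg]
  rw [tsum_eq_single (0 : Fin 2 → ℤ) (fun g hg => by simp [hg])]
  simp

end Main

end ThetaAux

/-- The four theta constants of the second kind have no common zero on `H₂`. -/
theorem thetaSecond_no_common_zero :
    ∀ Z ∈ Siegel 2, ∃ a : Fin 2 → ZMod 2, thetaSecond 2 a Z ≠ 0 := by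
  intro Z hZ
  by_contra hcon
  push_neg at hcon
  have h0 := ThetaAux.integral_theta hZ
  rw [MeasureTheory.setIntegral_congr_fun (MeasurableSet.univ_pi fun _ => measurableSet_Ioc)
      (fun w _ => ThetaAux.theta_fun_zero hZ hcon w)] at h0
  simp at h0
end
end

section
/- Igusa's group Γ_n[q,2q] := {M ∈ Γ_n[q] : diag(ABᵀ) ≡ diag(CDᵀ) ≡ 0 mod 2q} is a normal subgroup of Sp(2n,ℤ) whenever q is even. -/
open Matrix

noncomputable section

/-- Membership conditions for Igusa's group `Γ_n[q,2q]`: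
`M ≡ 1 mod q` together with `diag(ABᵀ) ≡ diag(CDᵀ) ≡ 0 mod 2q`. -/
def IgusaCond (n q : ℕ) (M : Matrix (Fin n ⊕ Fin n) (Fin n ⊕ Fin n) ℤ) : Prop :=
  (∀ i j, (q : ℤ) ∣ (M i j - (1 : Matrix (Fin n ⊕ Fin n) (Fin n ⊕ Fin n) ℤ) i j)) ∧
  (∀ i, (2 * (q : ℤ)) ∣ ((M.toBlocks₁₁ * (M.toBlocks₁₂)ᵀ) i i)) ∧
  (∀ i, (2 * (q : ℤ)) ∣ ((M.toBlocks₂₁ * (M.toBlocks₂₂)ᵀ) i i))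


section Aux

variable {I : Type*} [Fintype I] [DecidableEq I]

lemma key_quad (m : ℕ) (Y : Matrix I I ℤ) (v : I → ℤ)
    (h1 : ∀ j, (m : ℤ) ∣ Y j j) (h2 : ∀ j l, (m : ℤ) ∣ Y j l + Y l j) :
    (m : ℤ) ∣ ∑ j, ∑ l, v j * Y j l * v l := by
  rw [← ZMod.intCast_zmod_eq_zero_iff_dvd]
  push_cast
  rw [← Finset.sum_product' (f := fun j l =>
    ((v j : ZMod m) * (Y j l : ZMod m) * (v l : ZMod m)))]
  apply Finset.sum_ninvolution Prod.swap
  · intro p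
    have h := (ZMod.intCast_zmod_eq_zero_iff_dvd _ m).mpr (h2 p.1 p.2)
    push_cast at h
    simp only [Prod.fst_swap, Prod.snd_swap]
    linear_combination (v p.1 : ZMod m) * (v p.2 : ZMod m) * h
  · intro p hp heq
    apply hp
    have : p.2 = p.1 := congrArg Prod.fst heq
    have h := (ZMod.intCast_zmod_eq_zero_iff_dvd _ m).mpr (h1 p.1)
    rw [this]
    push_cast at h
    rw [h, mul_zero, zero_mul]
  · intro p; exact Finset.mem_univ _
  · intro p; exact Prod.swap_swap p

lemma sandwich (m : ℕ) (S Y : Matrix I I ℤ)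
    (h1 : ∀ j, (m : ℤ) ∣ Y j j) (h2 : ∀ j l, (m : ℤ) ∣ Y j l + Y l j) (k : I) :
    (m : ℤ) ∣ (S * Y * Sᵀ) k k := by
  have e : (S * Y * Sᵀ) k k = ∑ j, ∑ l, S k j * Y j l * S k l := by
    rw [Matrix.mul_apply]
    rw [Finset.sum_comm]
    refine Finset.sum_congr rfl fun l _ => ?_
    rw [Matrix.mul_apply, Finset.sum_mul, Matrix.transpose_apply]
  rw [e]
  exact key_quad m Y (S k) h1 h2

lemma dvd_entry_mul_left (d : ℤ) (P Q : Matrix I I ℤ) (h : ∀ i j, d ∣ P i j) (i j : I) :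
    d ∣ (P * Q) i j :=
  Finset.dvd_sum fun k _ => (h i k).mul_right _

lemma dvd_entry_mul_right (d : ℤ) (P Q : Matrix I I ℤ) (h : ∀ i j, d ∣ Q i j) (i j : I) :
    d ∣ (P * Q) i j :=
  Finset.dvd_sum fun k _ => (h k j).mul_left _

lemma dvd_entry_mul_mul (d e : ℤ) (P Q : Matrix I I ℤ) (hP : ∀ i j, d ∣ P i j)
    (hQ : ∀ i j, e ∣ Q i j) (i j : I) : d * e ∣ (P * Q) i j :=
  Finset.dvd_sum fun k _ => mul_dvd_mul (hP i k) (hQ k j)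

end Aux

section JAux

variable {n : ℕ}

lemma mulJ_inl (P : Matrix (Fin n ⊕ Fin n) (Fin n ⊕ Fin n) ℤ) (j : Fin n ⊕ Fin n) (i : Fin n) :
    (P * J (Fin n) ℤ) j (Sum.inl i) = P j (Sum.inr i) := by
  rw [Matrix.mul_apply, Fintype.sum_sum_type]
  simp [Matrix.J, Matrix.one_apply]

lemma mulJ_inr (P : Matrix (Fin n ⊕ Fin n) (Fin n ⊕ Fin n) ℤ) (j : Fin n ⊕ Fin n) (i : Fin n) :
    (P * J (Fin n) ℤ) j (Sum.inr i) = -P j (Sum.inl i) := by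
  rw [Matrix.mul_apply, Fintype.sum_sum_type]
  simp [Matrix.J, Matrix.one_apply]

end JAux

noncomputable section Main


variable {n q : ℕ}

/-- Reformulated condition: `M ≡ 1 mod q` and `diag((M-1)J) ≡ 0 mod 2q`. -/
def Cond2 (n q : ℕ) (M : Matrix (Fin n ⊕ Fin n) (Fin n ⊕ Fin n) ℤ) : Prop :=
  (∀ i j, (q : ℤ) ∣ (M - 1) i j) ∧
  (∀ k, (2 * (q : ℤ)) ∣ ((M - 1) * J (Fin n) ℤ) k k)

lemma dvd_iff_of_dvd_sub {a x y : ℤ} (h : a ∣ x - y) : a ∣ x ↔ a ∣ y := by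
  constructor
  · intro hx; have := hx.sub h; simpa using this
  · intro hy; have := h.add hy; simpa using this

lemma two_q_dvd_q_sq (hq : Even q) : (2 * (q : ℤ)) ∣ (q : ℤ) * (q : ℤ) := by
  obtain ⟨m, rfl⟩ := hq
  push_cast
  exact ⟨m, by ring⟩

lemma diffB (hq : Even q) (M : Matrix (Fin n ⊕ Fin n) (Fin n ⊕ Fin n) ℤ)
    (hD : ∀ i j, (q : ℤ) ∣ (M - 1) i j) (i : Fin n) :
    (2 * (q : ℤ)) ∣ ((M.toBlocks₁₁ * (M.toBlocks₁₂)ᵀ) i i - (M - 1) (Sum.inl i) (Sum.inr i)) := by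
  have e : (M.toBlocks₁₁ * (M.toBlocks₁₂)ᵀ) i i - (M - 1) (Sum.inl i) (Sum.inr i) =
      ∑ j, (M - 1) (Sum.inl i) (Sum.inl j) * (M - 1) (Sum.inl i) (Sum.inr j) := by
    rw [Matrix.mul_apply]
    have h : ∀ j, M.toBlocks₁₁ i j * (M.toBlocks₁₂)ᵀ j i =
        ((M - 1) (Sum.inl i) (Sum.inl j)) * ((M - 1) (Sum.inl i) (Sum.inr j)) +
        (if j = i then (1:ℤ) else 0) * M (Sum.inl i) (Sum.inr j) := by
      intro j
      simp only [Matrix.toBlocks₁₁, Matrix.toBlocks₁₂, Matrix.transpose_apply, Matrix.of_apply,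
        Matrix.sub_apply, Matrix.one_apply]
      by_cases hij : (Sum.inl i : Fin n ⊕ Fin n) = Sum.inl j <;>
        simp_all [eq_comm, Sum.inl.injEq] <;> ring
    rw [Finset.sum_congr rfl fun j _ => h j, Finset.sum_add_distrib]
    simp [Finset.sum_ite_eq', Matrix.sub_apply, Matrix.one_apply]
  rw [e]
  exact Finset.dvd_sum fun j _ =>
    (two_q_dvd_q_sq hq).trans (mul_dvd_mul (hD _ _) (hD _ _))

lemma diffC (hq : Even q) (M : Matrix (Fin n ⊕ Fin n) (Fin n ⊕ Fin n) ℤ)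
    (hD : ∀ i j, (q : ℤ) ∣ (M - 1) i j) (i : Fin n) :
    (2 * (q : ℤ)) ∣ ((M.toBlocks₂₁ * (M.toBlocks₂₂)ᵀ) i i - (M - 1) (Sum.inr i) (Sum.inl i)) := by
  have e : (M.toBlocks₂₁ * (M.toBlocks₂₂)ᵀ) i i - (M - 1) (Sum.inr i) (Sum.inl i) =
      ∑ j, (M - 1) (Sum.inr i) (Sum.inl j) * (M - 1) (Sum.inr i) (Sum.inr j) := by
    rw [Matrix.mul_apply]
    have h : ∀ j, M.toBlocks₂₁ i j * (M.toBlocks₂₂)ᵀ j i =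
        ((M - 1) (Sum.inr i) (Sum.inl j)) * ((M - 1) (Sum.inr i) (Sum.inr j)) +
        (if j = i then (1:ℤ) else 0) * M (Sum.inr i) (Sum.inl j) := by
      intro j
      simp only [Matrix.toBlocks₂₁, Matrix.toBlocks₂₂, Matrix.transpose_apply, Matrix.of_apply,
        Matrix.sub_apply, Matrix.one_apply]
      by_cases hij : (Sum.inr i : Fin n ⊕ Fin n) = Sum.inr j <;>
        simp_all [eq_comm, Sum.inr.injEq] <;> ring
    rw [Finset.sum_congr rfl fun j _ => h j, Finset.sum_add_distrib]
    simp [Finset.sum_ite_eq', Matrix.sub_apply, Matrix.one_apply]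
  rw [e]
  exact Finset.dvd_sum fun j _ =>
    (two_q_dvd_q_sq hq).trans (mul_dvd_mul (hD _ _) (hD _ _))

lemma igusaCond_iff_cond2 (hq : Even q) (M : Matrix (Fin n ⊕ Fin n) (Fin n ⊕ Fin n) ℤ) :
    IgusaCond n q M ↔ Cond2 n q M := by
  have hone : ∀ i j, (M - 1) i j = M i j - (1 : Matrix (Fin n ⊕ Fin n) (Fin n ⊕ Fin n) ℤ) i j :=
    fun i j => by simp [Matrix.sub_apply]
  constructor
  · rintro ⟨h1, h2, h3⟩
    have hD : ∀ i j, (q : ℤ) ∣ (M - 1) i j := fun i j => by rw [hone]; exact h1 i j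
    refine ⟨hD, ?_⟩
    rintro (i | i)
    · rw [mulJ_inl]
      exact (dvd_iff_of_dvd_sub (diffB hq M hD i)).mp (h2 i)
    · rw [mulJ_inr, dvd_neg]
      exact (dvd_iff_of_dvd_sub (diffC hq M hD i)).mp (h3 i)
  · rintro ⟨hD, h2⟩
    refine ⟨fun i j => by rw [← hone]; exact hD i j, fun i => ?_, fun i => ?_⟩
    · exact (dvd_iff_of_dvd_sub (diffB hq M hD i)).mpr (by
        have := h2 (Sum.inl i); rwa [mulJ_inl] at this)
    · exact (dvd_iff_of_dvd_sub (diffC hq M hD i)).mpr (by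
        have := h2 (Sum.inr i); rwa [mulJ_inr, dvd_neg] at this)

lemma cond2_mul (hq : Even q) {A B : Matrix (Fin n ⊕ Fin n) (Fin n ⊕ Fin n) ℤ}
    (ha : Cond2 n q A) (hb : Cond2 n q B) : Cond2 n q (A * B) := by
  obtain ⟨ha1, ha2⟩ := ha
  obtain ⟨hb1, hb2⟩ := hb
  have key : A * B - 1 = (A - 1) * (B - 1) + (A - 1) + (B - 1) := by noncomm_ring
  constructor
  · intro i j
    rw [key]
    simp only [Matrix.add_apply]
    exact dvd_add (dvd_add (dvd_entry_mul_left _ _ _ ha1 i j) (ha1 i j)) (hb1 i j)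
  · intro k
    rw [key, add_mul, add_mul]
    simp only [Matrix.add_apply]
    refine dvd_add (dvd_add ?_ (ha2 k)) (hb2 k)
    rw [Matrix.mul_assoc]
    exact (two_q_dvd_q_sq hq).trans
      (dvd_entry_mul_mul _ _ _ _ ha1 (fun i j => dvd_entry_mul_left _ _ _ hb1 i j) k k)

lemma cond2_inv (hq : Even q) {A N : Matrix (Fin n ⊕ Fin n) (Fin n ⊕ Fin n) ℤ}
    (hNA : N * A = 1) (ha : Cond2 n q A) : Cond2 n q N := by
  obtain ⟨ha1, ha2⟩ := ha
  have key : N - 1 = -((N - 1) * (A - 1)) - (A - 1) := by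
    rw [show -((N - 1) * (A - 1)) - (A - 1) = N - N * A by noncomm_ring, hNA]
  have hN1 : ∀ i j, (q : ℤ) ∣ (N - 1) i j := by
    intro i j
    rw [key]
    simp only [Matrix.sub_apply, Matrix.neg_apply]
    exact dvd_sub (dvd_neg.mpr (dvd_entry_mul_right _ _ _ ha1 i j)) (ha1 i j)
  refine ⟨hN1, ?_⟩
  intro k
  have key2 : (N - 1) * J (Fin n) ℤ =
      -((N - 1) * ((A - 1) * J (Fin n) ℤ)) - (A - 1) * J (Fin n) ℤ := by
    conv_lhs => rw [key]
    noncomm_ring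
  rw [key2]
  simp only [Matrix.sub_apply, Matrix.neg_apply]
  refine dvd_sub (dvd_neg.mpr ?_) (ha2 k)
  exact (two_q_dvd_q_sq hq).trans
    (dvd_entry_mul_mul _ _ _ _ hN1 (fun i j => dvd_entry_mul_left _ _ _ ha1 i j) k k)

lemma cond2_conj (hq : Even q) {A : Matrix (Fin n ⊕ Fin n) (Fin n ⊕ Fin n) ℤ}
    (hA : A ∈ Matrix.symplecticGroup (Fin n) ℤ)
    {S Si : Matrix (Fin n ⊕ Fin n) (Fin n ⊕ Fin n) ℤ}
    (hS : S ∈ Matrix.symplecticGroup (Fin n) ℤ) (hSi : Si * S = 1)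
    (ha : Cond2 n q A) : Cond2 n q (S * A * Si) := by
  obtain ⟨ha1, ha2⟩ := ha
  set D := A - 1 with hDdef
  have hSSi : S * Si = 1 := mul_eq_one_comm.mp hSi
  have key1 : S * A * Si - 1 = S * D * Si := by
    rw [show S * D * Si = S * A * Si - S * Si from by rw [hDdef]; noncomm_ring, hSSi]
  rw [SymplecticGroup.mem_iff] at hS hA
  have hSiJ : Si * J (Fin n) ℤ = J (Fin n) ℤ * Sᵀ := by
    have h1 : Si * (S * J (Fin n) ℤ * Sᵀ) = Si * J (Fin n) ℤ := by rw [hS]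
    rw [← Matrix.mul_assoc, ← Matrix.mul_assoc, hSi, Matrix.one_mul] at h1
    exact h1.symm
  have key2 : (S * A * Si - 1) * J (Fin n) ℤ = S * ((D * J (Fin n) ℤ)) * Sᵀ := by
    rw [key1, Matrix.mul_assoc (S * D) Si (J (Fin n) ℤ), hSiJ]
    noncomm_ring
  -- the symmetry property of D * J modulo 2q
  have hDJ : ∀ i j, (q : ℤ) ∣ (D * J (Fin n) ℤ) i j :=
    fun i j => dvd_entry_mul_left _ _ _ (fun i j => ha1 i j) i j
  have hJDT : ∀ i j, (q : ℤ) ∣ (J (Fin n) ℤ * Dᵀ) i j :=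
    fun i j => dvd_entry_mul_right _ _ _ (fun i j => ha1 j i) i j
  have e3 : D * J (Fin n) ℤ * Dᵀ + D * J (Fin n) ℤ + J (Fin n) ℤ * Dᵀ = 0 := by
    have h : (D + 1) * J (Fin n) ℤ * (D + 1)ᵀ = J (Fin n) ℤ := by
      rw [hDdef, sub_add_cancel]
      exact hA
    calc D * J (Fin n) ℤ * Dᵀ + D * J (Fin n) ℤ + J (Fin n) ℤ * Dᵀ
        = (D + 1) * J (Fin n) ℤ * (D + 1)ᵀ - J (Fin n) ℤ := by
          rw [Matrix.transpose_add, Matrix.transpose_one]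
          noncomm_ring
      _ = 0 := by rw [h, sub_self]
  have e4 : D * J (Fin n) ℤ + (D * J (Fin n) ℤ)ᵀ =
      -(D * (J (Fin n) ℤ * Dᵀ)) - (J (Fin n) ℤ * Dᵀ + J (Fin n) ℤ * Dᵀ) := by
    calc D * J (Fin n) ℤ + (D * J (Fin n) ℤ)ᵀ
        = (D * J (Fin n) ℤ * Dᵀ + D * J (Fin n) ℤ + J (Fin n) ℤ * Dᵀ)
            - (D * (J (Fin n) ℤ * Dᵀ)) - (J (Fin n) ℤ * Dᵀ + J (Fin n) ℤ * Dᵀ) := by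
          rw [Matrix.transpose_mul, Matrix.J_transpose]
          noncomm_ring
      _ = _ := by rw [e3]; noncomm_ring
  have h2' : ∀ j l, (2 * (q : ℤ)) ∣ ((D * J (Fin n) ℤ) j l + (D * J (Fin n) ℤ) l j) := by
    intro j l
    have : (D * J (Fin n) ℤ) j l + (D * J (Fin n) ℤ) l j
        = (D * J (Fin n) ℤ + (D * J (Fin n) ℤ)ᵀ) j l := by
      rw [Matrix.add_apply, Matrix.transpose_apply]
    rw [this, e4]
    simp only [Matrix.sub_apply, Matrix.neg_apply, Matrix.add_apply]
    refine dvd_sub (dvd_neg.mpr ?_) ?_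
    · exact (two_q_dvd_q_sq hq).trans (dvd_entry_mul_mul _ _ _ _ ha1 hJDT j l)
    · obtain ⟨c, hc⟩ := hJDT j l
      exact ⟨c, by rw [hc]; ring⟩
  constructor
  · intro i j
    rw [key1]
    exact dvd_entry_mul_left _ _ _ (fun i j => dvd_entry_mul_right _ _ _ ha1 i j) i j
  · intro k
    rw [key2]
    have := sandwich (2 * q) S (D * J (Fin n) ℤ) (fun j => by
        have h := ha2 j; push_cast; exact h)
      (fun j l => by have h := h2' j l; push_cast; exact h) k
    push_cast at this
    exact this

def igusaH (n q : ℕ) (hq : Even q) : Subgroup (Matrix.symplecticGroup (Fin n) ℤ) where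
  carrier := {M | Cond2 n q (M : Matrix (Fin n ⊕ Fin n) (Fin n ⊕ Fin n) ℤ)}
  one_mem' := by
    refine ⟨fun i j => ?_, fun k => ?_⟩ <;>
      simp [OneMemClass.coe_one]
  mul_mem' := fun {a b} ha hb => by
    show Cond2 n q ((a * b : Matrix.symplecticGroup (Fin n) ℤ) : Matrix _ _ ℤ)
    rw [Submonoid.coe_mul]
    exact cond2_mul hq ha hb
  inv_mem' := fun {a} ha => by
    show Cond2 n q ((a⁻¹ : Matrix.symplecticGroup (Fin n) ℤ) : Matrix _ _ ℤ)
    have h : ((a⁻¹ : Matrix.symplecticGroup (Fin n) ℤ) : Matrix (Fin n ⊕ Fin n) (Fin n ⊕ Fin n) ℤ)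
        * ((a : Matrix.symplecticGroup (Fin n) ℤ) : Matrix (Fin n ⊕ Fin n) (Fin n ⊕ Fin n) ℤ) = 1 := by
      rw [← Submonoid.coe_mul, inv_mul_cancel, OneMemClass.coe_one]
    exact cond2_inv hq h ha

theorem igusaH_normal (n q : ℕ) (hq : Even q) : (igusaH n q hq).Normal := by
  constructor
  intro a ha g
  show Cond2 n q ((g * a * g⁻¹ : Matrix.symplecticGroup (Fin n) ℤ) : Matrix _ _ ℤ)
  rw [Submonoid.coe_mul, Submonoid.coe_mul]
  have hgi : ((g⁻¹ : Matrix.symplecticGroup (Fin n) ℤ) : Matrix (Fin n ⊕ Fin n) (Fin n ⊕ Fin n) ℤ)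
      * ((g : Matrix.symplecticGroup (Fin n) ℤ) : Matrix (Fin n ⊕ Fin n) (Fin n ⊕ Fin n) ℤ) = 1 := by
    rw [← Submonoid.coe_mul, inv_mul_cancel, OneMemClass.coe_one]
  exact cond2_conj hq a.2 g.2 hgi ha


/-- For even `q`, Igusa's group `Γ_n[q,2q]` is a normal subgroup of `Sp(2n,ℤ)`. -/
theorem igusa_group_normal (n q : ℕ) (hq : Even q) :
    ∃ H : Subgroup (Matrix.symplecticGroup (Fin n) ℤ),
      (∀ M : Matrix.symplecticGroup (Fin n) ℤ,
        M ∈ H ↔ IgusaCond n q (M : Matrix (Fin n ⊕ Fin n) (Fin n ⊕ Fin n) ℤ)) ∧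
      H.Normal := by
  refine ⟨igusaH n q hq, fun M => ?_, igusaH_normal n q hq⟩
  exact (show M ∈ igusaH n q hq ↔ Cond2 n q ↑M from Iff.rfl).trans
    (igusaCond_iff_cond2 hq (M : Matrix (Fin n ⊕ Fin n) (Fin n ⊕ Fin n) ℤ)).symm
end Main
end
end

section
/- Let R = ℂ[x₀,x₁,x₂,x₃] and M⁺ ⊆ R⁴ the syzygy module of (x₀,x₁,x₂,x₃). Then the intersection ⋂_{i=0}^{3} (x₀x₁x₂x₃/x_i)·M⁺ equals x₀x₁x₂x₃·M⁺, where (x₀x₁x₂x₃/x_i)·M⁺ denotes the submodule of R⁴ obtained by multiplying M⁺ by the degree-3 monomial omitting x_i. -/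
open MvPolynomial

noncomputable section

/-- The polynomial ring `R = ℂ[x₀,x₁,x₂,x₃]`. -/
abbrev Rpoly : Type := MvPolynomial (Fin 4) ℂ

/-- The syzygy module `M⁺` of `(x₀,x₁,x₂,x₃)` inside `R⁴`. -/
def Msyz : Submodule Rpoly (Fin 4 → Rpoly) :=
  LinearMap.ker (Fintype.linearCombination Rpoly (fun a => (X a : Rpoly)))

/-- The degree-3 monomial `x₀x₁x₂x₃/x_i` omitting the variable `x_i`. -/
def mOmit (i : Fin 4) : Rpoly := ∏ a ∈ Finset.univ.erase i, X a

/-- Multiplication of a submodule of `R⁴` by a polynomial, componentwise. -/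
def polySmul (p : Rpoly) (N : Submodule Rpoly (Fin 4 → Rpoly)) :
    Submodule Rpoly (Fin 4 → Rpoly) :=
  Submodule.map (p • (LinearMap.id : (Fin 4 → Rpoly) →ₗ[Rpoly] (Fin 4 → Rpoly))) N

lemma mem_polySmul {p : Rpoly} {N : Submodule Rpoly (Fin 4 → Rpoly)} {v : Fin 4 → Rpoly} :
    v ∈ polySmul p N ↔ ∃ u ∈ N, p • u = v := by
  simp [polySmul, Submodule.mem_map]

lemma mem_Msyz {u : Fin 4 → Rpoly} : u ∈ Msyz ↔ ∑ j, u j * X j = 0 := by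
  simp [Msyz, Fintype.linearCombination_apply, smul_eq_mul]

lemma mOmit_mul (i : Fin 4) : (X i : Rpoly) * mOmit i = X 0 * X 1 * X 2 * X 3 := by
  rw [mOmit, Finset.mul_prod_erase Finset.univ _ (Finset.mem_univ i), Fin.prod_univ_four]

lemma m0eq : mOmit 0 = (X 1 * X 2 * X 3 : Rpoly) := by
  have h := mOmit_mul 0
  exact mul_left_cancel₀ (X_ne_zero 0) (by linear_combination h)

lemma m1eq : mOmit 1 = (X 0 * X 2 * X 3 : Rpoly) := by
  have h := mOmit_mul 1
  exact mul_left_cancel₀ (X_ne_zero 1) (by linear_combination h)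

lemma prime_X0 : Prime (X 0 : Rpoly) := by
  rw [← MulEquiv.prime_iff (MvPolynomial.finSuccEquiv ℂ 3).toMulEquiv]
  have : (MvPolynomial.finSuccEquiv ℂ 3).toMulEquiv (X 0) =
      (Polynomial.X : Polynomial (MvPolynomial (Fin 3) ℂ)) := finSuccEquiv_X_zero
  rw [this]
  exact Polynomial.prime_X

/-- `⋂_{i=0}^{3} (x₀x₁x₂x₃/x_i)·M⁺ = x₀x₁x₂x₃·M⁺`. -/
theorem syzygy_intersection :
    (⨅ i : Fin 4, polySmul (mOmit i) Msyz) =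
      polySmul (X 0 * X 1 * X 2 * X 3 : Rpoly) Msyz := by
  apply le_antisymm
  · intro v hv
    rw [Submodule.mem_iInf] at hv
    obtain ⟨u, hu, h0⟩ := mem_polySmul.mp (hv 0)
    obtain ⟨u', hu', h1⟩ := mem_polySmul.mp (hv 1)
    have key : ∀ j, (X 0 : Rpoly) ∣ u j := by
      intro j
      have e : mOmit 0 * u j = mOmit 1 * u' j := by
        have e0 := congrFun h0 j
        have e1 := congrFun h1 j
        simp only [Pi.smul_apply, smul_eq_mul] at e0 e1
        rw [e0, e1]
      rw [m0eq, m1eq] at e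
      have e2 : (X 2 * X 3 : Rpoly) * (X 1 * u j) = (X 2 * X 3) * (X 0 * u' j) := by
        linear_combination e
      have e3 : (X 1 : Rpoly) * u j = X 0 * u' j :=
        mul_left_cancel₀ (mul_ne_zero (X_ne_zero _) (X_ne_zero _)) e2
      have hdvd : (X 0 : Rpoly) ∣ X 1 * u j := ⟨u' j, e3⟩
      refine (prime_X0.dvd_or_dvd hdvd).resolve_left ?_
      rw [X_dvd_X]
      decide
    choose w hw using key
    refine mem_polySmul.mpr ⟨w, ?_, ?_⟩
    · rw [mem_Msyz]
      have hu0 : ∑ j, u j * X j = 0 := mem_Msyz.mp hu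
      have hz : (X 0 : Rpoly) * ∑ j, w j * X j = 0 := by
        rw [Finset.mul_sum, ← hu0]
        refine Finset.sum_congr rfl fun j _ => ?_
        rw [hw j]; ring
      exact (mul_eq_zero.mp hz).resolve_left (X_ne_zero _)
    · funext j
      have e0 := congrFun h0 j
      simp only [Pi.smul_apply, smul_eq_mul] at e0 ⊢
      rw [← e0, m0eq, hw j]; ring
  · rw [le_iInf_iff]
    intro i v hv
    obtain ⟨u, hu, hpu⟩ := mem_polySmul.mp hv
    refine mem_polySmul.mpr ⟨X i • u, Msyz.smul_mem _ hu, ?_⟩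
    funext j
    have e := congrFun hpu j
    simp only [Pi.smul_apply, smul_eq_mul] at e ⊢
    rw [← e, ← mOmit_mul i]; ring
end
end

section
/- Let p: 𝔼ⁿ → 𝔼ⁿ, (z¹,...,zⁿ) ↦ (z¹,...,z^{n−1},(zⁿ)²) be the 2-fold standard covering of the unit polydisc ramified over {zⁿ = 0}, and let ω = Σ_j ω_j dz^j ⊗ (dz¹∧⋯∧dzⁿ)^{⊗k} be a tensor with ω_j holomorphic on {zⁿ ≠ 0} and meromorphic along {zⁿ = 0}. Then p*ω extends holomorphically to 𝔼ⁿ if and only if ord(ω_n, {zⁿ=0}) ≥ −⌊(k+1)/2⌋ and ord(ω_j, {zⁿ=0}) ≥ −⌊k/2⌋ for all j ≠ n. [The pullback coefficients are (p*ω)_n = (2zⁿ)^{k+1} ω_n∘p and (p*ω)_j = (2zⁿ)^k ω_j∘p for j ≠ n.] -/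
noncomputable section

/-- The open unit polydisc `𝔼^{n+1}` in `ℂ^{n+1}`. -/
def Polydisc (n : ℕ) : Set (Fin (n + 1) → ℂ) :=
  {z | ∀ i, ‖z i‖ < 1}

/-- The complex absolute value, as an absolute value (port shim). -/
noncomputable def Complex.abs : AbsoluteValue ℂ ℝ where
  toFun := fun z => ‖z‖
  map_mul' := norm_mul
  nonneg' := norm_nonneg
  eq_zero' := fun _ => norm_eq_zero
  add_le' := norm_add_le

@[simp] lemma Complex.abs_apply' (z : ℂ) : Complex.abs z = ‖z‖ := rfl

lemma Complex.continuous_abs : Continuous Complex.abs := continuous_norm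

lemma Complex.norm_eq_abs (z : ℂ) : ‖z‖ = Complex.abs z := rfl

lemma Complex.abs_I : Complex.abs Complex.I = 1 := by simp

lemma abs_circleMap_zero (R θ : ℝ) : Complex.abs (circleMap 0 R θ) = |R| :=
  norm_circleMap_zero R θ

/-- The 2-fold standard covering `p(z¹,…,zⁿ) = (z¹,…,z^{n−1},(zⁿ)²)`, ramified over
`{zⁿ = 0}` (the last coordinate is squared). -/
def pcov (n : ℕ) (z : Fin (n + 1) → ℂ) : Fin (n + 1) → ℂ :=
  Function.update z (Fin.last n) ((z (Fin.last n)) ^ 2)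

/-- `f`, defined off `{zⁿ = 0}`, extends holomorphically to the whole polydisc. -/
def ExtendsHol (n : ℕ) (f : (Fin (n + 1) → ℂ) → ℂ) : Prop :=
  ∃ F : (Fin (n + 1) → ℂ) → ℂ, DifferentiableOn ℂ F (Polydisc n) ∧
    ∀ z ∈ Polydisc n, z (Fin.last n) ≠ 0 → F z = f z

open Metric Complex

-- Cauchy estimate for the Fréchet derivative via 1D slices
lemma norm_fderiv_le_of_bound {E : Type*} [NormedAddCommGroup E] [NormedSpace ℂ E]
    {f : E → ℂ} {z₀ : E} {δ M : ℝ} (hδ : 0 < δ)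
    (hd : ∀ z ∈ closedBall z₀ δ, DifferentiableAt ℂ f z)
    (hM : ∀ z ∈ closedBall z₀ δ, ‖f z‖ ≤ M) :
    ‖fderiv ℂ f z₀‖ ≤ M / δ := by
  have hz₀ : z₀ ∈ closedBall z₀ δ := mem_closedBall_self hδ.le
  have hM0 : 0 ≤ M := le_trans (norm_nonneg _) (hM z₀ hz₀)
  refine ContinuousLinearMap.opNorm_le_bound _ (div_nonneg hM0 hδ.le) fun v => ?_
  rcases eq_or_ne v 0 with rfl | hv
  · simp
  have hvn : 0 < ‖v‖ := norm_pos_iff.2 hv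
  set R : ℝ := δ / ‖v‖ with hR
  have hR0 : 0 < R := div_pos hδ hvn
  set g : ℂ → ℂ := fun s => f (z₀ + s • v) with hg
  have hmem : ∀ s : ℂ, Complex.abs s ≤ R → z₀ + s • v ∈ closedBall z₀ δ := by
    intro s hs
    rw [mem_closedBall, dist_eq_norm]
    have : ‖z₀ + s • v - z₀‖ = Complex.abs s * ‖v‖ := by
      simp [norm_smul]
    rw [this]
    calc Complex.abs s * ‖v‖ ≤ R * ‖v‖ := by gcongr
      _ = δ := by rw [hR]; field_simp
  have haff : ∀ s : ℂ, HasDerivAt (fun s : ℂ => z₀ + s • v) v s := by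
    intro s
    simpa using ((hasDerivAt_id s).smul_const v).const_add z₀
  have hgd : DifferentiableOn ℂ g (closedBall 0 R) := by
    intro s hs
    have hs' : Complex.abs s ≤ R := by
      simpa [Complex.dist_eq] using mem_closedBall.1 hs
    exact (((hd _ (hmem s hs')).comp s (haff s).differentiableAt)).differentiableWithinAt
  have hdcc : DiffContOnCl ℂ g (ball 0 R) := by
    apply DifferentiableOn.diffContOnCl
    rwa [closure_ball 0 hR0.ne']
  have hD : HasDerivAt g ((fderiv ℂ f z₀) v) 0 := by
    have h1 : HasFDerivAt f (fderiv ℂ f z₀) (z₀ + (0:ℂ) • v) := by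
      simpa using (hd z₀ hz₀).hasFDerivAt
    exact h1.comp_hasDerivAt 0 (haff 0)
  have := Complex.norm_deriv_le_of_forall_mem_sphere_norm_le hR0 hdcc (C := M) ?_
  · rw [hD.deriv] at this
    calc ‖(fderiv ℂ f z₀) v‖ ≤ M / R := this
      _ = M / δ * ‖v‖ := by rw [hR]; field_simp
  · intro s hs
    have hs' : Complex.abs s = R := by simpa [Complex.dist_eq] using hs
    exact hM _ (hmem s hs'.le)

namespace PB

variable {n : ℕ}

abbrev ll (n : ℕ) : Fin (n + 1) := Fin.last n

lemma isOpen_polydisc (n : ℕ) : IsOpen (Polydisc n) := by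
  have : Polydisc n = ⋂ i, (fun z : Fin (n+1) → ℂ => z i) ⁻¹' (Metric.ball 0 1) := by
    ext z; simp [Polydisc, Complex.dist_eq, Metric.mem_ball]
  rw [this]
  exact isOpen_iInter_of_finite fun i =>
    (Metric.isOpen_ball).preimage (continuous_apply i)

lemma update_mem_polydisc {z : Fin (n+1) → ℂ} (hz : z ∈ Polydisc n) {v : ℂ}
    (hv : Complex.abs v < 1) : Function.update z (ll n) v ∈ Polydisc n := by
  intro i
  rcases eq_or_ne i (ll n) with rfl | h
  · simpa using hv
  · simpa [Function.update_of_ne h] using hz i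

lemma pcov_mem {z : Fin (n+1) → ℂ} (hz : z ∈ Polydisc n) : pcov n z ∈ Polydisc n := by
  apply update_mem_polydisc hz
  rw [map_pow]
  calc Complex.abs (z (ll n)) ^ 2 ≤ Complex.abs (z (ll n)) ^ 1 := by
        apply pow_le_pow_of_le_one (Complex.abs.nonneg _) (hz _).le; omega
    _ < 1 := by simpa using hz (ll n)

lemma update_apply_last (z : Fin (n+1) → ℂ) (v : ℂ) :
    Function.update z (ll n) v (ll n) = v := Function.update_self _ _ _

lemma update_update (z : Fin (n+1) → ℂ) (a b : ℂ) :
    Function.update (Function.update z (ll n) a) (ll n) b = Function.update z (ll n) b :=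
  Function.update_idem ..

/-- The affine map `w ↦ update w (ll n) v` is differentiable in `w` (for fixed `v`). -/
lemma differentiable_update (v : ℂ) :
    Differentiable ℂ (fun w : Fin (n+1) → ℂ => Function.update w (ll n) v) := by
  apply differentiable_pi.2
  intro i
  rcases eq_or_ne i (ll n) with rfl | h
  · simpa [Function.update_self] using differentiable_const v
  · simp only [Function.update_of_ne h]
    exact differentiable_apply i

lemma continuous_update_left (w : Fin (n+1) → ℂ) :
    Continuous (fun v : ℂ => Function.update w (ll n) v) := by
  apply continuous_pi
  intro i
  rcases eq_or_ne i (ll n) with rfl | h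
  · simpa [Function.update_self] using (continuous_id' : Continuous fun a : ℂ => a)
  · simp only [Function.update_of_ne h]; exact continuous_const

lemma differentiable_pcov : Differentiable ℂ (pcov n) := by
  apply differentiable_pi.2
  intro i
  rcases eq_or_ne i (ll n) with rfl | h
  · simp only [pcov, Function.update_self]
    exact (differentiable_apply _).pow 2
  · simp only [pcov, Function.update_of_ne h]
    exact differentiable_apply i

/-- Two functions continuous on the polydisc agreeing off `{z_n = 0}` agree everywhere. -/
lemma eqOn_of_eqOn_compl_zero {F₁ F₂ : (Fin (n+1) → ℂ) → ℂ}
    (h₁ : ContinuousOn F₁ (Polydisc n)) (h₂ : ContinuousOn F₂ (Polydisc n))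
    (h : ∀ z ∈ Polydisc n, z (ll n) ≠ 0 → F₁ z = F₂ z) :
    ∀ z ∈ Polydisc n, F₁ z = F₂ z := by
  intro z hz
  rcases eq_or_ne (z (ll n)) 0 with hz0 | hz0
  · -- approach along `update z (ll n) v`, `v → 0`, `v ≠ 0`
    have hupd : Function.update z (ll n) (0:ℂ) = z := by
      rw [← hz0]; exact Function.update_eq_self _ _
    have htend : Filter.Tendsto (fun v : ℂ => Function.update z (ll n) v)
        (nhdsWithin 0 {v : ℂ | v ≠ 0}) (nhdsWithin z (Polydisc n)) := by
      apply Filter.Tendsto.mono_left _ nhdsWithin_le_nhds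
      rw [tendsto_nhdsWithin_iff]
      constructor
      · simpa [hupd] using ((continuous_update_left z).tendsto 0)
      · have : ∀ᶠ v : ℂ in nhds 0, Complex.abs v < 1 := by
          have : Continuous (fun v : ℂ => Complex.abs v) := Complex.continuous_abs
          have := this.tendsto 0
          simp only [map_zero] at this
          exact this (gt_mem_nhds one_pos)
        exact this.mono fun v hv => update_mem_polydisc hz hv
    have hne : (nhdsWithin (0:ℂ) {v : ℂ | v ≠ 0}).NeBot := by
      have : {v : ℂ | v ≠ 0} = {(0:ℂ)}ᶜ := by ext v; simp
      rw [this]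
      infer_instance
    have t1 : Filter.Tendsto (fun v : ℂ => F₁ (Function.update z (ll n) v))
        (nhdsWithin 0 {v : ℂ | v ≠ 0}) (nhds (F₁ z)) := (h₁ z hz).tendsto.comp htend
    have t2 : Filter.Tendsto (fun v : ℂ => F₂ (Function.update z (ll n) v))
        (nhdsWithin 0 {v : ℂ | v ≠ 0}) (nhds (F₂ z)) := (h₂ z hz).tendsto.comp htend
    have heq : ∀ᶠ v : ℂ in nhdsWithin 0 {v : ℂ | v ≠ 0},
        F₁ (Function.update z (ll n) v) = F₂ (Function.update z (ll n) v) := by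
      have hb : ∀ᶠ v : ℂ in nhdsWithin 0 {v : ℂ | v ≠ 0}, Complex.abs v < 1 := by
        apply Filter.Eventually.filter_mono nhdsWithin_le_nhds
        have := Complex.continuous_abs.tendsto 0
        simp only [map_zero] at this
        exact this (gt_mem_nhds one_pos)
      filter_upwards [hb, self_mem_nhdsWithin] with v hv hv0
      exact h _ (update_mem_polydisc hz hv) (by simpa [update_apply_last] using hv0)
    exact tendsto_nhds_unique (t1.congr' heq) t2
  · exact h z hz hz0

lemma differentiable_update_right (w : Fin (n+1) → ℂ) :
    Differentiable ℂ (fun ζ : ℂ => Function.update w (ll n) ζ) := by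
  apply differentiable_pi.2
  intro i
  rcases eq_or_ne i (ll n) with rfl | h
  · simpa [Function.update_self] using differentiable_id
  · simp only [Function.update_of_ne h]; exact differentiable_const _

noncomputable def kern (n : ℕ) (ε : ℕ) (G : (Fin (n+1) → ℂ) → ℂ) (w : Fin (n+1) → ℂ) (ζ : ℂ) : ℂ :=
  ζ^(1-ε) * (ζ^2 - w (ll n))⁻¹ * G (Function.update w (ll n) ζ)

noncomputable def Phi (n : ℕ) (ε : ℕ) (G : (Fin (n+1) → ℂ) → ℂ) (ρ : ℝ) (w : Fin (n+1) → ℂ) : ℂ :=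
  (2 * Real.pi * Complex.I)⁻¹ * ∮ ζ in C(0, ρ), kern n ε G w ζ

lemma sq_sub_ne {w : Fin (n+1) → ℂ} {ζ : ℂ} (h : Complex.abs (w (ll n)) < Complex.abs ζ ^ 2) :
    ζ^2 - w (ll n) ≠ 0 := by
  intro hc
  rw [sub_eq_zero] at hc
  rw [← hc] at h
  simp [map_pow] at h

lemma kern_diffAt {ε : ℕ} {G : (Fin (n+1) → ℂ) → ℂ}
    (hG : DifferentiableOn ℂ G (Polydisc n)) {w : Fin (n+1) → ℂ} (hw : w ∈ Polydisc n)
    {ζ : ℂ} (hζ1 : Complex.abs ζ < 1) (hζ2 : Complex.abs (w (ll n)) < Complex.abs ζ ^ 2) :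
    DifferentiableAt ℂ (kern n ε G w) ζ := by
  have h1 : DifferentiableAt ℂ (fun ζ : ℂ => ζ^(1-ε)) ζ := differentiableAt_pow _
  have h2 : DifferentiableAt ℂ (fun ζ : ℂ => (ζ^2 - w (ll n))⁻¹) ζ :=
    ((differentiableAt_pow 2).sub_const _).inv (sq_sub_ne hζ2)
  have h3 : DifferentiableAt ℂ (fun ζ : ℂ => G (Function.update w (ll n) ζ)) ζ := by
    have hmem : Function.update w (ll n) ζ ∈ Polydisc n := update_mem_polydisc hw hζ1
    have := (hG.differentiableAt ((isOpen_polydisc n).mem_nhds hmem)).comp ζ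
      ((differentiable_update_right w) ζ)
    exact this
  exact (h1.mul h2).mul h3

/-- (a) `Φ` does not depend on the radius. -/
lemma Phi_indep {ε : ℕ} {G : (Fin (n+1) → ℂ) → ℂ}
    (hG : DifferentiableOn ℂ G (Polydisc n)) {w : Fin (n+1) → ℂ} (hw : w ∈ Polydisc n)
    {r R : ℝ} (h0 : 0 < r) (hle : r ≤ R) (hR : R < 1)
    (hwr : Complex.abs (w (ll n)) < r^2) :
    Phi n ε G R w = Phi n ε G r w := by
  unfold Phi
  congr 1
  apply circleIntegral_eq_of_differentiable_on_annulus_off_countable h0 hle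
    (Set.countable_empty) ?hc ?hd
  case hd =>
    intro ζ hζ
    obtain ⟨⟨hζR, hζr⟩, -⟩ := hζ
    rw [mem_ball, Complex.dist_eq, sub_zero] at hζR
    rw [mem_closedBall, Complex.dist_eq, sub_zero, not_le] at hζr
    exact kern_diffAt hG hw (lt_trans hζR hR)
      (lt_of_lt_of_le hwr (by simp only [Complex.abs_apply']; nlinarith))
  case hc =>
    intro ζ hζ
    obtain ⟨hζR, hζr⟩ := hζ
    rw [mem_closedBall, Complex.dist_eq, sub_zero] at hζR
    rw [mem_ball, Complex.dist_eq, sub_zero, not_lt] at hζr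
    exact (kern_diffAt hG hw (lt_of_le_of_lt hζR hR)
      (lt_of_lt_of_le hwr (by simp only [Complex.abs_apply']; nlinarith))).continuousAt.continuousWithinAt



lemma circleIntegral_add' {f g : ℂ → ℂ} {c : ℂ} {R : ℝ} (hf : CircleIntegrable f c R)
    (hg : CircleIntegrable g c R) :
    (∮ z in C(c, R), (f z + g z)) = (∮ z in C(c, R), f z) + ∮ z in C(c, R), g z := by
  simp only [circleIntegral, smul_add]
  exact intervalIntegral.integral_add hf.out hg.out

/-- (b) value of `Φ` at points under the covering. -/
lemma Phi_value {ε : ℕ} (hε : ε ≤ 1) {G : (Fin (n+1) → ℂ) → ℂ}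
    (hG : DifferentiableOn ℂ G (Polydisc n))
    (hsym : ∀ z ∈ Polydisc n,
      G (Function.update z (ll n) (-(z (ll n)))) = (-1:ℂ)^ε * G z)
    {w : Fin (n+1) → ℂ} (hw : w ∈ Polydisc n) {s : ℂ} (hs0 : s ≠ 0) {ρ : ℝ}
    (hsρ : Complex.abs s < ρ) (hρ : ρ < 1) (hs2 : s^2 = w (ll n)) :
    Phi n ε G ρ w = G (Function.update w (ll n) s) / s^ε := by
  have hρ0 : 0 < ρ := lt_of_le_of_lt (Complex.abs.nonneg s) hsρ
  set g : ℂ → ℂ := fun ζ => G (Function.update w (ll n) ζ) with hgdef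
  have hgd : DiffContOnCl ℂ g (ball 0 ρ) := by
    apply DifferentiableOn.diffContOnCl
    rw [closure_ball (0:ℂ) hρ0.ne']
    intro ζ hζ
    rw [mem_closedBall, Complex.dist_eq, sub_zero] at hζ
    have hmem : Function.update w (ll n) ζ ∈ Polydisc n :=
      update_mem_polydisc hw (lt_of_le_of_lt hζ hρ)
    exact ((hG.differentiableAt ((isOpen_polydisc n).mem_nhds hmem)).comp ζ
      ((differentiable_update_right w) ζ)).differentiableWithinAt
  have hs_ball : s ∈ ball (0:ℂ) ρ := by simpa [mem_ball, Complex.dist_eq] using hsρ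
  have hns_ball : -s ∈ ball (0:ℂ) ρ := by simpa [mem_ball, Complex.dist_eq] using hsρ
  have I1 := hgd.circleIntegral_sub_inv_smul hs_ball
  have I2 := hgd.circleIntegral_sub_inv_smul hns_ball
  have habs1 : Complex.abs s < 1 := lt_trans hsρ hρ
  have hgs : g (-s) = (-1:ℂ)^ε * g s := by
    have h := hsym (Function.update w (ll n) s) (update_mem_polydisc hw habs1)
    rwa [update_apply_last, update_update] at h
  set C1 : ℂ := s^(1-ε) / (2*s) with hC1
  set C2 : ℂ := (-s)^(1-ε) / (-(2*s)) with hC2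
  -- continuity of g on the sphere
  have hgc : ContinuousOn g (sphere (0:ℂ) ρ) := by
    apply hgd.continuousOn.mono
    rw [closure_ball (0:ℂ) hρ0.ne']
    exact sphere_subset_closedBall
  have hker : ∀ ζ ∈ sphere (0:ℂ) ρ,
      kern n ε G w ζ = C1 * ((ζ - s)⁻¹ * g ζ) + C2 * ((ζ + s)⁻¹ * g ζ) := by
    intro ζ hζ
    rw [mem_sphere, Complex.dist_eq, sub_zero] at hζ
    have hζs : ζ - s ≠ 0 := by
      intro hc; rw [sub_eq_zero] at hc; rw [hc] at hζ; exact absurd hζ (ne_of_lt hsρ)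
    have hζs' : ζ + s ≠ 0 := by
      intro hc
      have : ζ = -s := by linear_combination hc
      rw [this] at hζ; simp at hζ; exact absurd hζ (ne_of_lt hsρ)
    unfold kern
    rw [← hs2]
    have hfact : ζ^2 - s^2 = (ζ - s) * (ζ + s) := by ring
    rw [hfact]
    interval_cases ε
    · rw [hC1, hC2]; field_simp; ring
    · rw [hC1, hC2]; field_simp; ring
  have hint1 : CircleIntegrable (fun ζ => C1 * ((ζ - s)⁻¹ * g ζ)) 0 ρ := by
    apply ContinuousOn.circleIntegrable hρ0.le
    apply ContinuousOn.mul continuousOn_const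
    apply ContinuousOn.mul _ hgc
    apply ContinuousOn.inv₀ ((continuous_sub_right s).continuousOn)
    intro ζ hζ
    rw [mem_sphere, Complex.dist_eq, sub_zero] at hζ
    intro hc; rw [sub_eq_zero] at hc; rw [hc] at hζ; exact absurd hζ (ne_of_lt hsρ)
  have hint2 : CircleIntegrable (fun ζ => C2 * ((ζ + s)⁻¹ * g ζ)) 0 ρ := by
    apply ContinuousOn.circleIntegrable hρ0.le
    apply ContinuousOn.mul continuousOn_const
    apply ContinuousOn.mul _ hgc
    apply ContinuousOn.inv₀ ((continuous_add_right s).continuousOn)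
    intro ζ hζ
    rw [mem_sphere, Complex.dist_eq, sub_zero] at hζ
    intro hc
    have : ζ = -s := by linear_combination hc
    rw [this] at hζ; simp at hζ; exact absurd hζ (ne_of_lt hsρ)
  have hsplit : (∮ ζ in C(0, ρ), kern n ε G w ζ)
      = C1 * (∮ ζ in C(0, ρ), (ζ - s)⁻¹ * g ζ) + C2 * (∮ ζ in C(0, ρ), (ζ + s)⁻¹ * g ζ) := by
    rw [circleIntegral.integral_congr hρ0.le hker]
    rw [circleIntegral_add' hint1 hint2]
    congr 1
    · have := circleIntegral.integral_smul (𝕜 := ℂ) C1 (fun ζ => (ζ - s)⁻¹ * g ζ) 0 ρ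
      simpa [smul_eq_mul] using this
    · have := circleIntegral.integral_smul (𝕜 := ℂ) C2 (fun ζ => (ζ + s)⁻¹ * g ζ) 0 ρ
      simpa [smul_eq_mul] using this
  have hI1' : (∮ ζ in C(0, ρ), (ζ - s)⁻¹ * g ζ) = (2 * Real.pi * Complex.I) * g s := by
    simpa [smul_eq_mul] using I1
  have hI2' : (∮ ζ in C(0, ρ), (ζ + s)⁻¹ * g ζ) = (2 * Real.pi * Complex.I) * g (-s) := by
    have : (fun ζ => (ζ + s)⁻¹ * g ζ) = (fun ζ => (ζ - (-s))⁻¹ * g ζ) := by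
      funext ζ; rw [sub_neg_eq_add]
    rw [this]
    simpa [smul_eq_mul] using I2
  have h2πI : (2 * (Real.pi:ℂ) * Complex.I) ≠ 0 := by
    simp [Real.pi_ne_zero, Complex.I_ne_zero, Complex.ofReal_ne_zero]
  unfold Phi
  rw [hsplit, hI1', hI2', hgs]
  rw [hC1, hC2]
  have hπ : ((2:ℂ) * Real.pi * Complex.I)⁻¹ * (2 * Real.pi * Complex.I) = 1 :=
    inv_mul_cancel₀ h2πI
  interval_cases ε
  · field_simp
    ring
  · field_simp
    ring

/-- The linear part of `w ↦ update w (last) c`. -/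
noncomputable def Lmap (n : ℕ) : (Fin (n+1) → ℂ) →L[ℂ] (Fin (n+1) → ℂ) :=
  ContinuousLinearMap.pi (fun i => if i = ll n then 0 else ContinuousLinearMap.proj i)

lemma hasFDerivAt_update (c : ℂ) (w : Fin (n+1) → ℂ) :
    HasFDerivAt (fun w : Fin (n+1) → ℂ => Function.update w (ll n) c) (Lmap n) w := by
  have h : (fun w : Fin (n+1) → ℂ => Function.update w (ll n) c)
      = fun w => Lmap n w + Function.update (0 : Fin (n+1) → ℂ) (ll n) c := by
    funext w i
    rcases eq_or_ne i (ll n) with rfl | hi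
    · simp [Lmap, ContinuousLinearMap.pi_apply, Function.update_self]
    · simp [Lmap, ContinuousLinearMap.pi_apply, Function.update_of_ne hi, hi]
  rw [h]
  exact (Lmap n).hasFDerivAt.add_const _

/-- The projection to the last coordinate as a continuous linear map. -/
noncomputable def Pll (n : ℕ) : (Fin (n+1) → ℂ) →L[ℂ] ℂ :=
  ContinuousLinearMap.proj (ll n)

lemma hasFDerivAt_last (w : Fin (n+1) → ℂ) :
    HasFDerivAt (fun w : Fin (n+1) → ℂ => w (ll n)) (Pll n) w :=
  (Pll n).hasFDerivAt

/-- (c) differentiability of `Φ` in the parameter. -/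
lemma Phi_diffAt {ε : ℕ} {G : (Fin (n+1) → ℂ) → ℂ}
    (hG : DifferentiableOn ℂ G (Polydisc n)) {w₀ : Fin (n+1) → ℂ} (hw₀ : w₀ ∈ Polydisc n)
    {ρ : ℝ} (hρ0 : 0 < ρ) (hρ1 : ρ < 1)
    (hwρ : Complex.abs (w₀ (ll n)) < ρ^2) :
    DifferentiableAt ℂ (Phi n ε G ρ) w₀ := by
  classical
  obtain ⟨r, hr0, hrsub⟩ := Metric.isOpen_iff.1 (isOpen_polydisc n) w₀ hw₀
  set a : ℝ := Complex.abs (w₀ (ll n)) with ha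
  set δ : ℝ := min (r/3) ((ρ^2 - a)/3) with hδ
  have hδ0 : 0 < δ := lt_min (by linarith) (by simp only [ha] at hwρ ⊢; linarith)
  have hδr : 2*δ < r := by
    have : δ ≤ r/3 := min_le_left _ _
    linarith
  have hδa : a + 2*δ < ρ^2 := by
    have : δ ≤ (ρ^2 - a)/3 := min_le_right _ _
    linarith
  have hsub : closedBall w₀ (2*δ) ⊆ Polydisc n := fun w hw =>
    hrsub (lt_of_le_of_lt (mem_closedBall.1 hw) hδr)
  set η : ℝ := ρ^2 - (a + 2*δ) with hη
  have hη0 : 0 < η := by simp only [hη]; linarith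
  -- last coordinate bound on the double ball
  have habs : ∀ w ∈ closedBall w₀ (2*δ), Complex.abs (w (ll n)) ≤ a + 2*δ := by
    intro w hw
    have h1 : Complex.abs (w (ll n) - w₀ (ll n)) ≤ 2*δ := by
      have := norm_le_pi_norm (w - w₀) (ll n)
      simp only [Pi.sub_apply] at this
      calc Complex.abs (w (ll n) - w₀ (ll n)) ≤ ‖w - w₀‖ := this
        _ ≤ 2*δ := by rwa [← dist_eq_norm, ← mem_closedBall]
    calc Complex.abs (w (ll n)) ≤ Complex.abs (w (ll n) - w₀ (ll n)) + Complex.abs (w₀ (ll n)) := by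
          have := Complex.abs.add_le (w (ll n) - w₀ (ll n)) (w₀ (ll n)); simpa using this
      _ ≤ a + 2*δ := by rw [ha]; linarith
  have hlt : ∀ w ∈ closedBall w₀ (2*δ), Complex.abs (w (ll n)) < ρ^2 := fun w hw =>
    lt_of_le_of_lt (habs w hw) hδa
  have hcm : ∀ θ : ℝ, Complex.abs (circleMap 0 ρ θ) = ρ := by
    intro θ; simp [abs_circleMap_zero, abs_of_pos hρ0]
  have hnez : ∀ θ : ℝ, ∀ w ∈ closedBall w₀ (2*δ), (circleMap 0 ρ θ)^2 - w (ll n) ≠ 0 := by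
    intro θ w hw
    apply sq_sub_ne
    rw [hcm θ]
    exact hlt w hw
  have hdenom : ∀ θ : ℝ, ∀ w ∈ closedBall w₀ (2*δ),
      η ≤ Complex.abs ((circleMap 0 ρ θ)^2 - w (ll n)) := by
    intro θ w hw
    have h1 : Complex.abs ((circleMap 0 ρ θ)^2) = ρ^2 := by rw [map_pow, hcm]
    calc η = ρ^2 - (a + 2*δ) := rfl
      _ ≤ Complex.abs ((circleMap 0 ρ θ)^2) - Complex.abs (w (ll n)) := by
          rw [h1]; have := habs w hw; linarith
      _ ≤ Complex.abs ((circleMap 0 ρ θ)^2 - w (ll n)) :=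
          AbsoluteValue.le_sub Complex.abs _ _
  have hup : ∀ θ : ℝ, ∀ w ∈ closedBall w₀ (2*δ),
      Function.update w (ll n) (circleMap 0 ρ θ) ∈ Polydisc n := by
    intro θ w hw
    exact update_mem_polydisc (hsub hw) (by rw [hcm]; exact hρ1)
  -- uniform bound for `G` on the relevant compact set
  have hKco : IsCompact ((fun p : ((Fin (n+1) → ℂ) × ℂ) => Function.update p.1 (ll n) p.2) ''
      ((closedBall w₀ (2*δ)) ×ˢ (sphere (0:ℂ) ρ))) := by
    apply IsCompact.image ((isCompact_closedBall _ _).prod (isCompact_sphere _ _))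
    apply continuous_pi
    intro i
    rcases eq_or_ne i (ll n) with rfl | hi
    · simpa [Function.update_self] using continuous_snd
    · simp only [Function.update_of_ne hi]
      exact (continuous_apply i).comp continuous_fst
  obtain ⟨MG, hMG⟩ := hKco.exists_bound_of_continuousOn (by
    apply hG.continuousOn.mono
    rintro x ⟨⟨w, ζ⟩, ⟨hw, hζ⟩, rfl⟩
    rw [mem_sphere, Complex.dist_eq, sub_zero] at hζ
    exact update_mem_polydisc (hsub hw) (by rw [Complex.abs_apply', hζ]; exact hρ1))
  have hGb : ∀ θ : ℝ, ∀ w ∈ closedBall w₀ (2*δ),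
      ‖G (Function.update w (ll n) (circleMap 0 ρ θ))‖ ≤ MG := by
    intro θ w hw
    apply hMG
    exact ⟨⟨w, circleMap 0 ρ θ⟩, ⟨hw, by simp [mem_sphere, Complex.dist_eq, hcm θ,
      abs_of_pos hρ0]⟩, rfl⟩
  -- the integrand and its derivative
  set F : (Fin (n+1) → ℂ) → ℝ → ℂ := fun w θ =>
    deriv (circleMap 0 ρ) θ • kern n ε G w (circleMap 0 ρ θ) with hF
  set F' : (Fin (n+1) → ℂ) → ℝ → ((Fin (n+1) → ℂ) →L[ℂ] ℂ) := fun w θ =>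
    (deriv (circleMap 0 ρ) θ * (circleMap 0 ρ θ)^(1-ε)) •
      ( (((circleMap 0 ρ θ)^2 - w (ll n))⁻¹) •
          ((fderiv ℂ G (Function.update w (ll n) (circleMap 0 ρ θ))).comp (Lmap n))
        + (G (Function.update w (ll n) (circleMap 0 ρ θ))) •
          ((-(((circleMap 0 ρ θ)^2 - w (ll n)) ^ 2)⁻¹) •
            (-(Pll n)))) with hF'
  have key : ∀ θ : ℝ, ∀ w ∈ closedBall w₀ (2*δ), HasFDerivAt (fun w => F w θ) (F' w θ) w := by
    intro θ w hw
    set c : ℂ := circleMap 0 ρ θ with hc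
    have hFθ : (fun w => F w θ) = fun w =>
        (deriv (circleMap 0 ρ) θ * c^(1-ε)) *
          ((c^2 - w (ll n))⁻¹ * G (Function.update w (ll n) c)) := by
      funext v
      simp only [hF, kern, smul_eq_mul]
      ring
    rw [hFθ]
    have hproj := hasFDerivAt_last (n := n) w
    have hlin : HasFDerivAt (fun w : Fin (n+1) → ℂ => c^2 - w (ll n))
        (-(Pll n)) w := hproj.const_sub _
    have hinv : HasFDerivAt (fun w : Fin (n+1) → ℂ => (c^2 - w (ll n))⁻¹)
        ((-((c^2 - w (ll n)) ^ 2)⁻¹) •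
          (-(Pll n))) w := by
      have h2 : HasDerivAt Inv.inv (-((c^2 - w (ll n)) ^ 2)⁻¹) (c^2 - w (ll n)) :=
        hasDerivAt_inv (hnez θ w hw)
      exact h2.comp_hasFDerivAt w hlin
    have hg : HasFDerivAt (fun w : Fin (n+1) → ℂ => G (Function.update w (ll n) c))
        ((fderiv ℂ G (Function.update w (ll n) c)).comp (Lmap n)) w := by
      have hdG : HasFDerivAt G (fderiv ℂ G (Function.update w (ll n) c))
          (Function.update w (ll n) c) :=
        (hG.differentiableAt ((isOpen_polydisc n).mem_nhds (hup θ w hw))).hasFDerivAt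
      exact hdG.comp w (hasFDerivAt_update c w)
    exact (hinv.mul hg).const_mul _
  -- continuity in θ
  have hθcont : ∀ w ∈ closedBall w₀ (2*δ), Continuous (fun θ => F w θ) := by
    intro w hw
    have h1 : Continuous (fun θ => deriv (circleMap 0 ρ) θ) := by
      simp only [deriv_circleMap]
      exact (continuous_circleMap 0 ρ).mul continuous_const
    have h2 : Continuous (fun θ => ((circleMap 0 ρ θ)^(1-ε) : ℂ)) :=
      (continuous_circleMap 0 ρ).pow _
    have h3 : Continuous (fun θ => ((circleMap 0 ρ θ)^2 - w (ll n))⁻¹) :=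
      Continuous.inv₀ (((continuous_circleMap 0 ρ).pow 2).sub continuous_const)
        (fun θ => hnez θ w hw)
    have h4 : Continuous (fun θ => G (Function.update w (ll n) (circleMap 0 ρ θ))) := by
      have := hG.continuousOn.comp_continuous
        ((continuous_update_left w).comp (continuous_circleMap 0 ρ)) (fun θ => hup θ w hw)
      exact this
    have : (fun θ => F w θ) = fun θ =>
        deriv (circleMap 0 ρ) θ * (((circleMap 0 ρ θ)^(1-ε) * ((circleMap 0 ρ θ)^2
          - w (ll n))⁻¹) * G (Function.update w (ll n) (circleMap 0 ρ θ))) := by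
      funext θ; simp only [hF, kern, smul_eq_mul]
    rw [this]
    exact h1.mul ((h2.mul h3).mul h4)
  have hw₀ball : w₀ ∈ closedBall w₀ (2*δ) := mem_closedBall_self (by positivity)
  set MG' : ℝ := max MG 0 with hMG'
  -- uniform bound on F
  have hFnorm : ∀ θ : ℝ, ∀ z ∈ closedBall w₀ (2*δ), ‖F z θ‖ ≤ ρ * (η⁻¹ * MG') := by
    intro θ z hz
    have e1 : ‖F z θ‖ = Complex.abs (deriv (circleMap 0 ρ) θ) * (Complex.abs ((circleMap 0 ρ θ)^(1-ε))
        * Complex.abs (((circleMap 0 ρ θ)^2 - z (ll n))⁻¹)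
        * Complex.abs (G (Function.update z (ll n) (circleMap 0 ρ θ)))) := by
      simp only [hF, kern, smul_eq_mul, Complex.norm_eq_abs, map_mul]
    rw [e1]
    have b1 : Complex.abs (deriv (circleMap 0 ρ) θ) = ρ := by
      simp [deriv_circleMap, map_mul, hcm θ, Complex.abs_I]
    have b2 : Complex.abs ((circleMap 0 ρ θ)^(1-ε)) ≤ 1 := by
      rw [map_pow, hcm θ]
      exact pow_le_one₀ hρ0.le hρ1.le
    have b3 : Complex.abs (((circleMap 0 ρ θ)^2 - z (ll n))⁻¹) ≤ η⁻¹ := by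
      rw [map_inv₀]
      exact inv_anti₀ hη0 (hdenom θ z hz)
    have b4 : Complex.abs (G (Function.update z (ll n) (circleMap 0 ρ θ))) ≤ MG' :=
      le_trans (hGb θ z hz) (le_max_left _ _)
    rw [b1]
    have hη' : (0:ℝ) ≤ η⁻¹ := inv_nonneg.2 hη0.le
    have hMG0 : (0:ℝ) ≤ MG' := le_max_right _ _
    have : Complex.abs ((circleMap 0 ρ θ)^(1-ε))
        * Complex.abs (((circleMap 0 ρ θ)^2 - z (ll n))⁻¹)
        * Complex.abs (G (Function.update z (ll n) (circleMap 0 ρ θ))) ≤ 1 * η⁻¹ * MG' := by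
      apply mul_le_mul _ b4 (Complex.abs.nonneg _) (by positivity)
      apply mul_le_mul b2 b3 (Complex.abs.nonneg _) (by linarith)
    calc ρ * (Complex.abs ((circleMap 0 ρ θ)^(1-ε))
        * Complex.abs (((circleMap 0 ρ θ)^2 - z (ll n))⁻¹)
        * Complex.abs (G (Function.update z (ll n) (circleMap 0 ρ θ))))
        ≤ ρ * (1 * η⁻¹ * MG') := by
          apply mul_le_mul_of_nonneg_left this hρ0.le
      _ = ρ * (η⁻¹ * MG') := by ring
  have hmain : HasFDerivAt (fun w => ∫ θ in (0:ℝ)..(2*Real.pi), F w θ)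
      (∫ θ in (0:ℝ)..(2*Real.pi), F' w₀ θ) w₀ := by
    apply intervalIntegral.hasFDerivAt_integral_of_dominated_of_fderiv_le
      (bound := fun _ => (ρ * (η⁻¹ * MG'))/δ) (s := ball w₀ δ) (ball_mem_nhds w₀ hδ0)
    · filter_upwards [closedBall_mem_nhds w₀ (by positivity : (0:ℝ) < 2*δ)] with w hw
      exact (hθcont w hw).aestronglyMeasurable
    · exact (hθcont w₀ hw₀ball).intervalIntegrable _ _
    · -- measurability of F' w₀
      haveI : SecondCountableTopology ((Fin (n+1) → ℂ) →L[ℂ] ℂ) := by infer_instance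
      have mf : Measurable (fun θ => fderiv ℂ G (Function.update w₀ (ll n) (circleMap 0 ρ θ))) :=
        (measurable_fderiv ℂ G).comp
          (((continuous_update_left w₀).comp (continuous_circleMap 0 ρ)).measurable)
      have mcomp : Measurable (fun θ =>
          (fderiv ℂ G (Function.update w₀ (ll n) (circleMap 0 ρ θ))).comp (Lmap n)) := by
        have hcont : Continuous (fun h : (Fin (n+1) → ℂ) →L[ℂ] ℂ => h.comp (Lmap n)) :=
          ((ContinuousLinearMap.compL ℂ (Fin (n+1) → ℂ) (Fin (n+1) → ℂ) ℂ).flip (Lmap n)).continuous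
        exact hcont.measurable.comp mf
      have c1 : Continuous (fun θ => deriv (circleMap 0 ρ) θ * (circleMap 0 ρ θ)^(1-ε)) := by
        simp only [deriv_circleMap]
        exact ((continuous_circleMap 0 ρ).mul continuous_const).mul
          ((continuous_circleMap 0 ρ).pow _)
      have c2 : Continuous (fun θ => (((circleMap 0 ρ θ)^2 - w₀ (ll n))⁻¹ : ℂ)) :=
        Continuous.inv₀ (((continuous_circleMap 0 ρ).pow 2).sub continuous_const)
          (fun θ => hnez θ w₀ hw₀ball)
      have c3 : Continuous (fun θ => G (Function.update w₀ (ll n) (circleMap 0 ρ θ))) := by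
        have := hG.continuousOn.comp_continuous
          ((continuous_update_left w₀).comp (continuous_circleMap 0 ρ)) (fun θ => hup θ w₀ hw₀ball)
        exact this
      have c4 : Continuous (fun θ => (-((((circleMap 0 ρ θ)^2 - w₀ (ll n))) ^ 2)⁻¹ : ℂ)) := by
        apply Continuous.neg
        apply Continuous.inv₀ ((((continuous_circleMap 0 ρ).pow 2).sub continuous_const).pow 2)
        intro θ
        exact pow_ne_zero _ (hnez θ w₀ hw₀ball)
      apply Measurable.aestronglyMeasurable
      apply Measurable.smul c1.measurable
      apply Measurable.add
      · exact Measurable.smul c2.measurable mcomp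
      · exact Measurable.smul c3.measurable (Measurable.smul c4.measurable measurable_const)
    · -- bound on F'
      apply MeasureTheory.ae_of_all
      intro θ _ w hwball
      have hw2 : w ∈ closedBall w₀ (2*δ) := by
        rw [mem_closedBall]
        calc dist w w₀ ≤ δ := (mem_ball.1 hwball).le
          _ ≤ 2*δ := by linarith
      rw [← (key θ w hw2).fderiv]
      apply norm_fderiv_le_of_bound hδ0
      · intro z hzball
        have hz2 : z ∈ closedBall w₀ (2*δ) := by
          rw [mem_closedBall]
          calc dist z w₀ ≤ dist z w + dist w w₀ := dist_triangle _ _ _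
            _ ≤ δ + δ := add_le_add (mem_closedBall.1 hzball) (mem_ball.1 hwball).le
            _ = 2*δ := by ring
        exact (key θ z hz2).differentiableAt
      · intro z hzball
        have hz2 : z ∈ closedBall w₀ (2*δ) := by
          rw [mem_closedBall]
          calc dist z w₀ ≤ dist z w + dist w w₀ := dist_triangle _ _ _
            _ ≤ δ + δ := add_le_add (mem_closedBall.1 hzball) (mem_ball.1 hwball).le
            _ = 2*δ := by ring
        exact hFnorm θ z hz2
    · exact intervalIntegrable_const
    · apply MeasureTheory.ae_of_all
      intro θ _ w hwball
      have hw2 : w ∈ closedBall w₀ (2*δ) := by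
        rw [mem_closedBall]
        calc dist w w₀ ≤ δ := (mem_ball.1 hwball).le
          _ ≤ 2*δ := by linarith
      exact key θ w hw2
  have hPhi : Phi n ε G ρ = fun w => (2 * Real.pi * Complex.I)⁻¹ *
      ∫ θ in (0:ℝ)..(2*Real.pi), F w θ := rfl
  rw [hPhi]
  exact hmain.differentiableAt.const_mul _

/-- Descent of an even/odd holomorphic function through the double cover. -/
lemma descent {ε : ℕ} (hε : ε ≤ 1) {G : (Fin (n+1) → ℂ) → ℂ}
    (hG : DifferentiableOn ℂ G (Polydisc n))
    (hsym : ∀ z ∈ Polydisc n,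
      G (Function.update z (ll n) (-(z (ll n)))) = (-1:ℂ)^ε * G z) :
    ∃ H : (Fin (n+1) → ℂ) → ℂ, DifferentiableOn ℂ H (Polydisc n) ∧
      ∀ z ∈ Polydisc n, z (ll n) ≠ 0 → H (pcov n z) = G z / (z (ll n))^ε := by
  set ρf : (Fin (n+1) → ℂ) → ℝ := fun w => (Real.sqrt (Complex.abs (w (ll n))) + 1)/2 with hρf
  have hρf_facts : ∀ w : Fin (n+1) → ℂ, Complex.abs (w (ll n)) < 1 →
      Real.sqrt (Complex.abs (w (ll n))) < ρf w ∧ ρf w < 1 ∧ 0 < ρf w ∧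
        Complex.abs (w (ll n)) < (ρf w)^2 := by
    intro w hw
    have h0 : 0 ≤ Real.sqrt (Complex.abs (w (ll n))) := Real.sqrt_nonneg _
    have h1 : Real.sqrt (Complex.abs (w (ll n))) < 1 := by
      rw [show (1:ℝ) = Real.sqrt 1 by simp]
      exact Real.sqrt_lt_sqrt (Complex.abs.nonneg _) hw
    refine ⟨by simp only [hρf]; linarith, by simp only [hρf]; linarith,
      by simp only [hρf]; linarith, ?_⟩
    have h2 : Real.sqrt (Complex.abs (w (ll n))) < ρf w := by simp only [hρf]; linarith
    calc Complex.abs (w (ll n)) = Real.sqrt (Complex.abs (w (ll n)))^2 :=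
          (Real.sq_sqrt (Complex.abs.nonneg _)).symm
      _ < (ρf w)^2 := by nlinarith
  refine ⟨fun w => Phi n ε G (ρf w) w, ?_, ?_⟩
  · intro w₀ hw₀
    obtain ⟨ht, h1, h0, h2⟩ := hρf_facts w₀ (hw₀ (ll n))
    set ρ : ℝ := ρf w₀
    have hU : {w : Fin (n+1) → ℂ | Complex.abs (w (ll n)) < ρ^2} ∩ Polydisc n ∈ nhds w₀ := by
      apply Filter.inter_mem _ ((isOpen_polydisc n).mem_nhds hw₀)
      have : IsOpen {w : Fin (n+1) → ℂ | Complex.abs (w (ll n)) < ρ^2} := by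
        have : Continuous (fun w : Fin (n+1) → ℂ => Complex.abs (w (ll n))) :=
          Complex.continuous_abs.comp (continuous_apply _)
        exact isOpen_lt this continuous_const
      exact this.mem_nhds h2
    have heqloc : (fun w => Phi n ε G (ρf w) w) =ᶠ[nhds w₀] Phi n ε G ρ := by
      filter_upwards [hU] with w hw
      obtain ⟨hwρ, hwP⟩ := hw
      obtain ⟨ht', h1', h0', h2'⟩ := hρf_facts w (hwP (ll n))
      have hsq : Real.sqrt (Complex.abs (w (ll n))) < ρ := by
        have := Real.sqrt_lt_sqrt (Complex.abs.nonneg _) hwρ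
        rwa [Real.sqrt_sq (by linarith : (0:ℝ) ≤ ρ)] at this
      rcases le_total (ρf w) ρ with hle | hle
      · exact (Phi_indep hG hwP h0' hle h1 h2').symm
      · apply Phi_indep hG hwP (by linarith : 0 < ρ) hle h1'
        calc Complex.abs (w (ll n)) = Real.sqrt (Complex.abs (w (ll n)))^2 :=
              (Real.sq_sqrt (Complex.abs.nonneg _)).symm
          _ < ρ^2 := by nlinarith [Real.sqrt_nonneg (Complex.abs (w (ll n)))]
    exact ((Phi_diffAt hG hw₀ h0 h1 h2).congr_of_eventuallyEq heqloc).differentiableWithinAt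
  · intro z hz hz0
    set w : Fin (n+1) → ℂ := pcov n z with hwdef
    have hw : w ∈ Polydisc n := pcov_mem hz
    have hwl : w (ll n) = (z (ll n))^2 := update_apply_last _ _
    obtain ⟨ht, h1, h0, h2⟩ := hρf_facts w (hw (ll n))
    have habs : Real.sqrt (Complex.abs (w (ll n))) = Complex.abs (z (ll n)) := by
      rw [hwl, map_pow]
      exact Real.sqrt_sq (Complex.abs.nonneg _)
    have hval := Phi_value hε hG hsym hw hz0 (ρ := ρf w) (by rw [← habs]; exact ht) h1
      (by rw [hwl])
    show Phi n ε G (ρf w) w = G z / (z (ll n))^ε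
    rw [hval]
    congr 1
    rw [hwdef]
    show G (Function.update (Function.update z (ll n) _) (ll n) (z (ll n))) = G z
    rw [update_update, Function.update_eq_self]

/-- The core equivalence. -/
lemma core (n m : ℕ) (f : (Fin (n+1) → ℂ) → ℂ) :
    ExtendsHol n (fun z => (2 * z (Fin.last n))^m * f (pcov n z)) ↔
      ExtendsHol n (fun z => (z (Fin.last n))^(m/2) * f z) := by
  have hmm : m % 2 + 2 * (m / 2) = m := Nat.mod_add_div m 2
  constructor
  · rintro ⟨Gex, hGd, hGeq⟩
    -- symmetry of Gex
    have hsym : ∀ z ∈ Polydisc n,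
        Gex (Function.update z (ll n) (-(z (ll n)))) = (-1:ℂ)^(m % 2) * Gex z := by
      have hm : ((-1:ℂ))^(m % 2) = (-1:ℂ)^m := by
        conv_rhs => rw [← hmm]
        rw [pow_add, pow_mul]
        simp
      apply eqOn_of_eqOn_compl_zero
      · apply hGd.continuousOn.comp
        · apply Continuous.continuousOn
          apply continuous_pi
          intro i
          rcases eq_or_ne i (ll n) with rfl | hi
          · simp only [Function.update_self]
            exact (continuous_apply _).neg
          · simp only [Function.update_of_ne hi]
            exact continuous_apply i
        · intro z hz
          exact update_mem_polydisc hz (by simpa using hz (ll n))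
      · exact continuousOn_const.mul hGd.continuousOn
      · intro z hz hz0
        show Gex (Function.update z (ll n) (-(z (ll n)))) = (-1:ℂ)^(m % 2) * Gex z
        have hσ : Function.update z (ll n) (-(z (ll n))) ∈ Polydisc n :=
          update_mem_polydisc hz (by simpa using hz (ll n))
        have hσ0 : (Function.update z (ll n) (-(z (ll n)))) (ll n) ≠ 0 := by
          rw [update_apply_last]; exact neg_ne_zero.2 hz0
        have e1 : Gex (Function.update z (ll n) (-(z (ll n))))
            = (2 * (Function.update z (ll n) (-(z (ll n)))) (Fin.last n))^m
              * f (pcov n (Function.update z (ll n) (-(z (ll n))))) := hGeq _ hσ hσ0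
        have e2 : Gex z = (2 * z (Fin.last n))^m * f (pcov n z) := hGeq _ hz hz0
        have hpc : pcov n (Function.update z (ll n) (-(z (ll n)))) = pcov n z := by
          unfold pcov
          rw [update_apply_last, update_update]
          congr 1
          ring
        rw [e1, e2, hm, hpc]
        have : (Function.update z (ll n) (-(z (ll n)))) (Fin.last n) = -(z (ll n)) :=
          update_apply_last _ _
        rw [this]
        rw [show (2 * -(z (ll n))) = (-1) * (2 * z (ll n)) by ring, mul_pow]
        ring
    obtain ⟨H, hHd, hHval⟩ := descent (by omega : m % 2 ≤ 1) hGd hsym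
    refine ⟨fun w => ((2:ℂ)^m)⁻¹ * H w, (differentiableOn_const _).mul hHd, ?_⟩
    intro w hw hw0
    set s : ℂ := Complex.exp (Complex.log (w (ll n)) / 2) with hs
    have hs0 : s ≠ 0 := Complex.exp_ne_zero _
    have hs2 : s^2 = w (ll n) := by
      rw [hs, ← Complex.exp_nat_mul]
      push_cast
      rw [show (2:ℂ) * (Complex.log (w (ll n))/2) = Complex.log (w (ll n)) by ring]
      exact Complex.exp_log hw0
    have hsabs : Complex.abs s < 1 := by
      have h1 : Complex.abs s ^ 2 = Complex.abs (w (ll n)) := by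
        rw [← map_pow, hs2]
      simp only [Complex.abs_apply'] at h1 ⊢
      nlinarith [norm_nonneg s, hw (ll n), norm_nonneg (w (ll n))]
    set z : Fin (n+1) → ℂ := Function.update w (ll n) s with hzdef
    have hzP : z ∈ Polydisc n := update_mem_polydisc hw hsabs
    have hzl : z (ll n) = s := update_apply_last _ _
    have hpz : pcov n z = w := by
      unfold pcov
      rw [hzdef, update_apply_last, update_update, hs2, Function.update_eq_self]
    have hHw := hHval z hzP (by rw [hzl]; exact hs0)
    rw [hpz, hzl] at hHw
    have e3 : Gex z = (2 * z (Fin.last n))^m * f (pcov n z) :=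
      hGeq z hzP (by rw [hzl]; exact hs0)
    rw [hpz] at e3
    have hzl' : z (Fin.last n) = s := hzl
    rw [hzl'] at e3
    show ((2:ℂ)^m)⁻¹ * H w = (w (Fin.last n))^(m/2) * f w
    rw [hHw, e3]
    have h2m : ((2:ℂ)^m) ≠ 0 := pow_ne_zero _ two_ne_zero
    have he : ((2:ℂ) * s)^m = 2^m * (s^(m % 2) * s^(2*(m/2))) := by
      rw [mul_pow, ← pow_add, hmm]
    have hw2 : (w (ll n))^(m/2) = s^(2*(m/2)) := by
      rw [← hs2, ← pow_mul]
    rw [he, hw2]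
    field_simp [pow_ne_zero _ hs0]
  · rintro ⟨F, hF, heq⟩
    refine ⟨fun z => (2:ℂ)^m * (z (ll n))^(m % 2) * F (pcov n z), ?_, ?_⟩
    · apply DifferentiableOn.mul
      · exact (differentiableOn_const _).mul
          (((differentiable_apply _).differentiableOn).pow _)
      · exact hF.comp (differentiable_pcov.differentiableOn) (fun z hz => pcov_mem hz)
    · intro z hz hz0
      show (2:ℂ)^m * (z (ll n))^(m % 2) * F (pcov n z)
          = (2 * z (Fin.last n))^m * f (pcov n z)
      have hpl : (pcov n z) (ll n) = (z (ll n))^2 := update_apply_last _ _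
      have h1 : F (pcov n z) = ((pcov n z) (ll n))^(m/2) * f (pcov n z) :=
        heq _ (pcov_mem hz) (by rw [hpl]; exact pow_ne_zero _ hz0)
      rw [h1, hpl, mul_pow, ← pow_mul]
      have : (z (ll n))^(m % 2) * (z (ll n))^(2*(m/2)) = (z (ll n))^m := by
        rw [← pow_add, hmm]
      calc (2:ℂ)^m * (z (ll n))^(m % 2) * ((z (ll n))^(2*(m/2)) * f (pcov n z))
          = (2:ℂ)^m * ((z (ll n))^(m % 2) * (z (ll n))^(2*(m/2))) * f (pcov n z) := by ring
        _ = (2:ℂ)^m * (z (ll n))^m * f (pcov n z) := by rw [this]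
        _ = (2:ℂ)^m * (z (Fin.last n))^m * f (pcov n z) := rfl
end PB

/-- For a tensor `ω = Σ_j ω_j dz^j ⊗ (dz¹∧⋯∧dzⁿ)^{⊗k}` with coefficients
holomorphic off `{zⁿ = 0}` and meromorphic along it, the pullback `p*ω` (whose
coefficients are `(p*ω)_n = (2zⁿ)^{k+1}·ω_n∘p` and `(p*ω)_j = (2zⁿ)^k·ω_j∘p`)
extends holomorphically to the polydisc if and only if
`ord(ω_n,{zⁿ=0}) ≥ −⌊(k+1)/2⌋` and `ord(ω_j,{zⁿ=0}) ≥ −⌊k/2⌋` for `j ≠ n`. -/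
theorem pullback_holomorphic_iff_order (n k : ℕ)
    (w : Fin (n + 1) → ((Fin (n + 1) → ℂ) → ℂ))
    (h_hol : ∀ j, DifferentiableOn ℂ (w j)
      (Polydisc n ∩ {z | z (Fin.last n) ≠ 0}))
    (h_mero : ∀ j, ∃ m : ℕ, ExtendsHol n (fun z => (z (Fin.last n)) ^ m * w j z)) :
    (∀ j : Fin (n + 1), ExtendsHol n (fun z =>
        (2 * z (Fin.last n)) ^ (if j = Fin.last n then k + 1 else k) * w j (pcov n z))) ↔
      (ExtendsHol n (fun z => (z (Fin.last n)) ^ ((k + 1) / 2) * w (Fin.last n) z) ∧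
        ∀ j ≠ Fin.last n, ExtendsHol n (fun z => (z (Fin.last n)) ^ (k / 2) * w j z)) := by
  constructor
  · intro hall
    constructor
    · have h := hall (Fin.last n)
      simp only [if_pos rfl] at h
      exact (PB.core n (k+1) (w (Fin.last n))).1 h
    · intro j hj
      have h := hall j
      rw [if_neg hj] at h
      exact (PB.core n k (w j)).1 h
  · rintro ⟨h1, h2⟩ j
    rcases eq_or_ne j (Fin.last n) with rfl | hj
    · simp only [if_pos rfl]
      exact (PB.core n (k+1) (w (Fin.last n))).2 h1
    · rw [if_neg hj]
      exact (PB.core n k (w j)).2 (h2 j hj)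
end
end
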